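/- arXiv:1210.1734 — 4 statements merged into one kernel-verified Lean document; each statement's English description precedes it below -/
import Mathlib

section
/- Let R be a root system with positive system R^+, simple roots R^s, I ⊆ R^s, R_I the root subsystem generated by I with positive system R_I^+ = R_I ∩ R^+, W_I the subgroup of the Weyl group generated by {s_α : α ∈ I}, and w_I its longest element. Then ρ + w_I ρ = Σ_{β ∈ R^+ \ R_I^+} β, where ρ = (1/2) Σ_{β ∈ R^+} β. -/
/-- A (crystallographic, reduced) root system with a chosen positive system and base,
in a vector space over `ℚ`.  `coroot α` is the linear functional `⟨·, α^∨⟩`. -/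
structure RootSystemData (V : Type*) [AddCommGroup V] [Module ℚ V] where
  /-- the set of roots -/
  R : Finset V
  /-- the positive roots -/
  Rpos : Finset V
  /-- the simple roots -/
  Rs : Finset V
  /-- `coroot α v = ⟨v, α^∨⟩` -/
  coroot : V → V →ₗ[ℚ] ℚ
  Rpos_sub : Rpos ⊆ R
  Rs_sub : Rs ⊆ Rpos
  zero_not_mem : (0 : V) ∉ R
  neg_mem : ∀ α ∈ R, -α ∈ R
  pos_iff : ∀ α ∈ R, (α ∈ Rpos ↔ -α ∉ Rpos)
  coroot_self : ∀ α ∈ R, coroot α α = 2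
  coroot_neg : ∀ α ∈ R, coroot (-α) = -coroot α
  coroot_int : ∀ α ∈ R, ∀ β ∈ R, ∃ n : ℤ, coroot α β = (n : ℚ)
  reflect_mem : ∀ α ∈ R, ∀ β ∈ R, β - coroot α β • α ∈ R
  coroot_reflect : ∀ α ∈ R, ∀ β ∈ R, ∀ v : V,
    coroot (β - coroot α β • α) v = coroot β (v - coroot α v • α)
  simples_indep : LinearIndependent ℚ ((↑) : Rs → V)
  pos_span : ∀ β ∈ Rpos, ∃ c : V → ℕ, β = ∑ γ ∈ Rs, (c γ : ℚ) • γ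

namespace RootSystemData

variable {V : Type*} [AddCommGroup V] [Module ℚ V]

/-- The subgroup of `GL(V)` generated by the reflections `s_α` for roots `α ∈ A`.
Taking `A = Rs` gives the Weyl group `W`; taking `A = I ⊆ Rs` gives the
parabolic subgroup `W_I`. -/
def weyl (S : RootSystemData V) (A : Set V) : Subgroup (V ≃ₗ[ℚ] V) :=
  Subgroup.closure
    { g : V ≃ₗ[ℚ] V | ∃ α ∈ A ∩ (S.R : Set V), ∀ v : V, g v = v - S.coroot α v • α }

/-- `R_I^+`: the positive roots lying in the integral span of `I`. -/
noncomputable def posOf (S : RootSystemData V) (I : Finset V) : Finset V :=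
  letI := Classical.decPred fun β : V => β ∈ Submodule.span ℤ (I : Set V)
  S.Rpos.filter fun β => β ∈ Submodule.span ℤ (I : Set V)

/-- Coefficient vanishing: a ℚ-combination of simple roots lying in the ℚ-span of `I ⊆ Rs`
has zero coefficient at every simple root not in `I`. -/
lemma coeff_zero [DecidableEq V] (S : RootSystemData V) {I : Finset V} (hI : I ⊆ S.Rs)
    {e : V → ℚ} (hx : (∑ γ ∈ S.Rs, e γ • γ) ∈ Submodule.span ℚ (I : Set V)) :
    ∀ γ ∈ S.Rs, γ ∉ I → e γ = 0 := by
  obtain ⟨f, -, hf⟩ := Submodule.mem_span_finset.mp hx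
  set g : V → ℚ := fun γ => e γ - (if γ ∈ I then f γ else 0) with hg
  have hsum : ∑ γ ∈ S.Rs, g γ • γ = 0 := by
    have h1 : ∑ γ ∈ S.Rs, (if γ ∈ I then f γ else 0) • γ = ∑ γ ∈ I, f γ • γ := by
      rw [Finset.sum_congr rfl (fun γ _ => by rw [ite_smul, zero_smul]), Finset.sum_ite_mem,
        Finset.inter_eq_right.mpr hI]
    simp only [hg, sub_smul, Finset.sum_sub_distrib, h1, hf, sub_self]
  have hli := Fintype.linearIndependent_iff.mp S.simples_indep (fun i => g ↑i)
  have : ∑ i : {x // x ∈ S.Rs}, g ↑i • (↑i : V) = 0 := by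
    rw [Finset.sum_coe_sort S.Rs (fun γ => g γ • γ)]; exact hsum
  intro γ hγ hγI
  have := hli this ⟨γ, hγ⟩
  simpa [hg, hγI] using this

/-- Every element of `W_I` maps `R` into `R` and moves vectors of `R` by an element
of the ℤ-span of `I`. -/
lemma weyl_prop [DecidableEq V] (S : RootSystemData V) (I : Finset V) {w : V ≃ₗ[ℚ] V}
    (hw : w ∈ S.weyl (I : Set V)) :
    ∀ β ∈ S.R, w β ∈ S.R ∧ w β - β ∈ Submodule.span ℤ (I : Set V) := by
  refine Subgroup.closure_induction (p := fun g _ => ∀ β ∈ S.R, g β ∈ S.R ∧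
      g β - β ∈ Submodule.span ℤ (I : Set V)) ?_ ?_ ?_ ?_ hw
  · rintro g ⟨α, ⟨hαI, hαR⟩, hgdef⟩ β hβ
    obtain ⟨n, hn⟩ := S.coroot_int α hαR β hβ
    constructor
    · rw [hgdef]; exact S.reflect_mem α hαR β hβ
    · rw [hgdef]
      have : β - S.coroot α β • α - β = -(n • α) := by
        rw [hn, Int.cast_smul_eq_zsmul]; abel
      rw [this]
      exact Submodule.neg_mem _ (Submodule.smul_mem _ n (Submodule.subset_span hαI))
  · intro β hβ; exact ⟨hβ, by simp⟩
  · intro x y _ _ hx hy β hβ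
    obtain ⟨h1, h2⟩ := hy β hβ
    obtain ⟨h3, h4⟩ := hx (y β) h1
    refine ⟨h3, ?_⟩
    have : (x * y) β - β = (x (y β) - y β) + (y β - β) := by
      show x (y β) - β = _; abel
    rw [this]; exact Submodule.add_mem _ h4 h2
  · intro x _ hx β hβ
    have himg : S.R.image (⇑x) = S.R := by
      refine Finset.eq_of_subset_of_card_le ?_ ?_
      · intro v hv
        obtain ⟨γ, hγ, rfl⟩ := Finset.mem_image.mp hv
        exact (hx γ hγ).1
      · rw [Finset.card_image_of_injective S.R x.injective]
    obtain ⟨γ, hγ, hγβ⟩ := Finset.mem_image.mp (himg ▸ hβ)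
    have hinv : x⁻¹ β = γ := by
      rw [← hγβ]; exact x.symm_apply_apply γ
    refine ⟨hinv ▸ hγ, ?_⟩
    rw [hinv, ← hγβ]
    have := (hx γ hγ).2
    have h : γ - x γ = -(x γ - γ) := by abel
    rw [h]; exact Submodule.neg_mem _ this

lemma pos_step [DecidableEq V] (S : RootSystemData V) {I : Finset V} (hI : I ⊆ S.Rs) {w : V ≃ₗ[ℚ] V}
    (hw : w ∈ S.weyl (I : Set V)) :
    ∀ β ∈ S.Rpos, β ∉ Submodule.span ℤ (I : Set V) →
      w β ∈ S.Rpos ∧ w β ∉ Submodule.span ℤ (I : Set V) := by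
  intro β hβp hβs
  have hβR := S.Rpos_sub hβp
  obtain ⟨hwR, hwdiff⟩ := S.weyl_prop I hw β hβR
  have hspanQ : ∀ v : V, v ∈ Submodule.span ℤ (I : Set V) → v ∈ Submodule.span ℚ (I : Set V) :=
    fun v hv => Submodule.span_subset_span ℤ ℚ _ hv
  have hwpos : w β ∈ S.Rpos := by
    rw [S.pos_iff _ hwR]
    intro hneg
    obtain ⟨c, hc⟩ := S.pos_span _ hneg
    obtain ⟨d, hd⟩ := S.pos_span _ hβp
    have hmem : (∑ γ ∈ S.Rs, ((c γ + d γ : ℕ) : ℚ) • γ) ∈ Submodule.span ℚ (I : Set V) := by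
      have : (∑ γ ∈ S.Rs, ((c γ + d γ : ℕ) : ℚ) • γ) = -(w β) + β := by
        rw [hc, hd, ← Finset.sum_add_distrib]
        congr 1; ext γ; push_cast; rw [add_smul]
      rw [this]
      have : -(w β) + β = -(w β - β) := by abel
      rw [this]
      exact Submodule.neg_mem _ (hspanQ _ hwdiff)
    have hzero := S.coeff_zero hI hmem
    have hd0 : ∀ γ ∈ S.Rs, γ ∉ I → d γ = 0 := by
      intro γ h1 h2
      have := hzero γ h1 h2
      have h3 : (c γ : ℚ) + d γ = 0 := by push_cast at this ⊢; linarith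
      have := add_eq_zero_iff_of_nonneg (by positivity) (by positivity) |>.mp h3
      exact_mod_cast this.2
    apply hβs
    rw [hd]
    have : (∑ γ ∈ S.Rs, (d γ : ℚ) • γ) = ∑ γ ∈ I, (d γ : ℚ) • γ := by
      refine (Finset.sum_subset hI ?_).symm
      intro x hx hxI; rw [hd0 x hx hxI]; simp
    rw [this]
    refine Submodule.sum_mem _ ?_
    intro γ hγ
    have : (d γ : ℚ) • γ = ((d γ : ℤ) : ℚ) • γ := by norm_num
    rw [this, Int.cast_smul_eq_zsmul]
    exact Submodule.smul_mem _ _ (Submodule.subset_span hγ)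
  refine ⟨hwpos, ?_⟩
  intro hws
  apply hβs
  have : β = w β - (w β - β) := by abel
  rw [this]
  exact Submodule.sub_mem _ hws hwdiff

end RootSystemData

open RootSystemData in
/-- `ρ + w_I ρ = Σ_{β ∈ R^+ \ R_I^+} β`, where `w_I` is the longest element
of the parabolic subgroup `W_I` (characterized by `w_I (R_I^+) = −R_I^+`). -/
theorem statement0 {V : Type*} [AddCommGroup V] [Module ℚ V] [DecidableEq V]
    (S : RootSystemData V) (I : Finset V) (hI : I ⊆ S.Rs)
    (ρ : V) (hρ : (2 : ℚ) • ρ = ∑ β ∈ S.Rpos, β)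
    (wI : V ≃ₗ[ℚ] V) (hwI : wI ∈ S.weyl (I : Set V))
    (hwIlong : ∀ β ∈ S.posOf I, -(wI β) ∈ S.posOf I) :
    ρ + wI ρ = ∑ β ∈ S.Rpos \ S.posOf I, β := by
  classical
  set A := S.Rpos \ S.posOf I with hA
  set B := S.posOf I with hB
  have hBsub : B ⊆ S.Rpos := Finset.filter_subset _ _
  have hmemB : ∀ β, β ∈ B ↔ β ∈ S.Rpos ∧ β ∈ Submodule.span ℤ (I : Set V) := by
    intro β; simp [hB, RootSystemData.posOf, Finset.mem_filter]
  have hmemA : ∀ β, β ∈ A ↔ β ∈ S.Rpos ∧ β ∉ Submodule.span ℤ (I : Set V) := by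
    intro β
    rw [hA, Finset.mem_sdiff, hmemB]
    constructor
    · rintro ⟨h1, h2⟩; exact ⟨h1, fun hs => h2 ⟨h1, hs⟩⟩
    · rintro ⟨h1, h2⟩; exact ⟨h1, fun hs => h2 hs.2⟩
  -- wI permutes A
  have hAimg : A.image (⇑wI) = A := by
    refine Finset.eq_of_subset_of_card_le ?_ ?_
    · intro v hv
      obtain ⟨γ, hγ, rfl⟩ := Finset.mem_image.mp hv
      obtain ⟨h1, h2⟩ := (hmemA γ).mp hγ
      exact (hmemA _).mpr (S.pos_step hI hwI γ h1 h2)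
    · rw [Finset.card_image_of_injective A wI.injective]
  have hsumA : ∑ β ∈ A, wI β = ∑ β ∈ A, β := by
    conv_rhs => rw [← hAimg]
    rw [Finset.sum_image (fun x _ y _ h => wI.injective h)]
  -- the map β ↦ -(wI β) permutes B
  have hBimg : B.image (fun β => -(wI β)) = B := by
    refine Finset.eq_of_subset_of_card_le ?_ ?_
    · intro v hv
      obtain ⟨γ, hγ, rfl⟩ := Finset.mem_image.mp hv
      exact hwIlong γ hγ
    · rw [Finset.card_image_of_injective B
        (fun a b h => wI.injective (neg_injective h))]
  have hsumB : ∑ β ∈ B, wI β = -∑ β ∈ B, β := by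
    have : ∑ β ∈ B, -(wI β) = ∑ β ∈ B, β := by
      conv_rhs => rw [← hBimg]
      rw [Finset.sum_image (fun a ha b hb h => wI.injective (neg_injective h))]
    rw [← this, Finset.sum_neg_distrib, neg_neg]
  have hsplit : ∑ β ∈ A, β + ∑ β ∈ B, β = ∑ β ∈ S.Rpos, β := Finset.sum_sdiff hBsub
  have hw2 : wI (∑ β ∈ S.Rpos, β) = ∑ β ∈ S.Rpos, wI β := map_sum wI _ _
  have hwsplit : ∑ β ∈ A, wI β + ∑ β ∈ B, wI β = ∑ β ∈ S.Rpos, wI β :=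
    Finset.sum_sdiff hBsub
  have key : (2 : ℚ) • (ρ + wI ρ) = (2 : ℚ) • ∑ β ∈ A, β := by
    rw [smul_add, hρ]
    have : (2 : ℚ) • wI ρ = wI ((2 : ℚ) • ρ) := (map_smul wI _ _).symm
    rw [this, hρ, hw2, ← hwsplit, hsumA, hsumB, ← hsplit, two_smul]
    abel
  exact smul_right_injective V (by norm_num : (2 : ℚ) ≠ 0) key
end

section
/- For a module M of finite length over a ring, the least n with soc^n M = M equals the least n with rad^n M = 0 (this common value is the Loewy length ℓℓ(M)). Here soc^1 M = soc M is the sum of all simple submodules, soc^{i+1} M is the preimage in M of soc(M/soc^i M), rad^1 M = rad M is the intersection of all maximal submodules, and rad^{i+1} M = rad(rad^i M). -/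
section LoewySeries

variable (R : Type*) [Ring R] (M : Type*) [AddCommGroup M] [Module R M]

/-- The socle of a module: the sum of all its simple submodules. -/
noncomputable def socM : Submodule R M :=
  sSup {m : Submodule R M | IsSimpleModule R ↥m}

/-- The radical of a module: the intersection of all its maximal (proper) submodules. -/
noncomputable def radM : Submodule R M :=
  sInf {m : Submodule R M | IsCoatom m}

variable {R M}

/-- Given `N ≤ M`, the preimage in `M` of the socle of `M/N`. -/
noncomputable def socStep (N : Submodule R M) : Submodule R M :=
  Submodule.comap N.mkQ (socM R (M ⧸ N))

/-- Given `N ≤ M`, the radical of `N` viewed as a submodule of `M`. -/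
noncomputable def radOf (N : Submodule R M) : Submodule R M :=
  (radM R ↥N).map N.subtype

variable (R M)

/-- The socle series: `soc⁰ M = 0`, `soc^{i+1} M` is the preimage in `M` of
`soc (M / soc^i M)`. -/
noncomputable def socSeries : ℕ → Submodule R M
  | 0 => ⊥
  | n + 1 => socStep (socSeries n)

/-- The radical series: `rad⁰ M = M`, `rad^{i+1} M = rad (rad^i M)`. -/
noncomputable def radSeries : ℕ → Submodule R M
  | 0 => ⊤
  | n + 1 => radOf (radSeries n)

/-- The Loewy length: the least `n` with `soc^n M = M`. -/
noncomputable def loewyLength : ℕ := sInf {n | socSeries R M n = ⊤}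

end LoewySeries

section AuxLemmas

variable {R : Type*} [Ring R] {M : Type*} [AddCommGroup M] [Module R M]
variable {N : Type*} [AddCommGroup N] [Module R N]

lemma radM_def : radM R M = sInf {m : Submodule R M | IsCoatom m} := rfl

/-- Any linear map sends the radical into the radical. -/
lemma map_radM_le (f : M →ₗ[R] N) : (radM R M).map f ≤ radM R N := by
  rw [radM_def (M := N)]
  refine le_sInf fun K hK => ?_
  rw [Submodule.map_le_iff_le_comap]
  set g := K.mkQ ∘ₗ f with hg
  have hker : Submodule.comap f K = LinearMap.ker g := by
    ext x
    simp [hg, LinearMap.mem_ker, Submodule.Quotient.mk_eq_zero]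
  rw [hker]
  by_cases h0 : g = 0
  · simp [h0]
  · haveI : IsSimpleModule R (N ⧸ K) := isSimpleModule_iff_isCoatom.mpr hK
    have hsurj : Function.Surjective g := by
      rw [← LinearMap.range_eq_top]
      rcases eq_bot_or_eq_top (LinearMap.range g) with h | h
      · exact absurd (LinearMap.range_eq_bot.mp h) h0
      · exact h
    exact sInf_le (LinearMap.isCoatom_ker_of_surjective hsurj)

/-- The radical of a semisimple module is trivial. -/
lemma radM_eq_bot_of_isSemisimple [IsSemisimpleModule R M] : radM R M = ⊥ := by
  rcases IsSemisimpleModule.eq_bot_or_exists_simple_le (radM R M) with h | ⟨m, hm, hsimple⟩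
  · exact h
  · exfalso
    obtain ⟨K, hK⟩ := exists_isCompl m
    haveI := hsimple
    haveI : IsSimpleModule R (M ⧸ K) :=
      IsSimpleModule.congr (Submodule.quotientEquivOfIsCompl K m hK.symm)
    have hco : IsCoatom K := isSimpleModule_iff_isCoatom.mp this
    have h1 : m ≤ K := hm.trans (sInf_le hco)
    have h2 : m = ⊥ := hK.disjoint.eq_bot_of_le h1
    exact (isSimpleModule_iff_isAtom.mp hsimple).1 h2

/-- The socle is a semisimple module. -/
lemma socM_isSemisimple : IsSemisimpleModule R (socM R M) := by
  have h : socM R M = ⨆ m ∈ {m : Submodule R M | IsSimpleModule R ↥m}, m := by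
    rw [socM, sSup_eq_iSup]
  haveI : IsSemisimpleModule R
      ↥(⨆ m ∈ {m : Submodule R M | IsSimpleModule R ↥m}, m) :=
    isSemisimpleModule_biSup_of_isSemisimpleModule_submodule
      (p := fun m => m)
      (fun m hm => by haveI : IsSimpleModule R ↥m := hm; infer_instance)
  exact IsSemisimpleModule.congr (LinearEquiv.ofEq _ _ h)

/-- A semisimple submodule is contained in the socle. -/
lemma le_socM_of_isSemisimple (P : Submodule R M) [IsSemisimpleModule R P] :
    P ≤ socM R M := by
  have h : Submodule.map P.subtype ⊤ = P := by
    rw [Submodule.map_top, Submodule.range_subtype]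
  rw [← h, ← IsSemisimpleModule.sSup_simples_eq_top R P, sSup_eq_iSup]
  simp only [Submodule.map_iSup]
  refine iSup₂_le fun m hm => le_sSup ?_
  haveI : IsSimpleModule R ↥m := hm
  exact IsSimpleModule.congr
    (Submodule.equivMapOfInjective P.subtype P.injective_subtype m).symm

/-- For an Artinian module, the radical is the intersection of finitely many coatoms. -/
lemma radM_eq_finset_inf [IsArtinian R M] :
    ∃ s : Finset (Submodule R M), (∀ K ∈ s, IsCoatom K) ∧ radM R M = s.inf id := by
  classical
  let T : Set (Submodule R M) := {P | ∃ s : Finset (Submodule R M),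
    (∀ K ∈ s, IsCoatom K) ∧ P = s.inf id}
  have hne : T.Nonempty := ⟨⊤, ∅, by simp, by simp⟩
  obtain ⟨P, ⟨s, hs, hPs⟩, hmin⟩ :=
    (IsWellFounded.wf (r := ((· < ·) : Submodule R M → Submodule R M → Prop))).has_min T hne
  refine ⟨s, hs, le_antisymm (Finset.le_inf fun K hK => sInf_le (hs K hK)) ?_⟩
  rw [radM_def]
  refine le_sInf fun K hK => ?_
  have hmem : P ⊓ K ∈ T := ⟨insert K s, by
    intro L hL
    rcases Finset.mem_insert.mp hL with rfl | hL
    · exact hK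
    · exact hs L hL, by rw [Finset.inf_insert, hPs, id, inf_comm]⟩
  have hnlt : ¬ (P ⊓ K < P) := fun hlt => hmin _ hmem hlt
  have hP : P ⊓ K = P := by
    by_contra hne'
    exact hnlt (lt_of_le_of_ne inf_le_left hne')
  calc s.inf id = P := hPs.symm
    _ ≤ K := hP ▸ inf_le_right

/-- For an Artinian module, the quotient by the radical is semisimple. -/
lemma quotient_radM_isSemisimple [IsArtinian R M] :
    IsSemisimpleModule R (M ⧸ radM R M) := by
  classical
  obtain ⟨s, hs, hrad⟩ := radM_eq_finset_inf (R := R) (M := M)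
  -- the product of the simple quotients
  let Q := ∀ K : s, M ⧸ (K : Submodule R M)
  haveI : ∀ K : s, IsSimpleModule R (M ⧸ (K : Submodule R M)) := fun K =>
    isSimpleModule_iff_isCoatom.mpr (hs K K.2)
  haveI : IsSemisimpleModule R Q := by
    refine isSemisimpleModule_of_isSemisimpleModule_submodule'
      (p := fun K : s => LinearMap.range (LinearMap.single R (fun K : s => M ⧸ (K : Submodule R M)) K))
      (fun K => IsSemisimpleModule.range _) ?_
    simp_rw [LinearMap.range_eq_map]
    rw [Submodule.iSup_map_single (p := fun _ => ⊤), Submodule.pi_top]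
  let g : M →ₗ[R] Q := LinearMap.pi fun K : s => Submodule.mkQ _
  have hker : LinearMap.ker g = radM R M := by
    rw [hrad]
    ext x
    constructor
    · intro hx
      refine Submodule.mem_finsetInf.mpr fun K hK => ?_
      have h0 := congrFun (LinearMap.mem_ker.mp hx) ⟨K, hK⟩
      have h1 : (Submodule.Quotient.mk x : M ⧸ K) = 0 := h0
      exact (Submodule.Quotient.mk_eq_zero _).mp h1
    · intro hx
      refine LinearMap.mem_ker.mpr (funext fun K => ?_)
      show (Submodule.Quotient.mk x : M ⧸ (K : Submodule R M)) = 0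
      exact (Submodule.Quotient.mk_eq_zero _).mpr (Submodule.mem_finsetInf.mp hx K K.2)
  exact IsSemisimpleModule.congr ((Submodule.quotEquivOfEq _ _ hker.symm).trans g.quotKerEquivRange)

/-- Key step: if `N` is contained in the preimage of the socle of `M/P`,
then the radical of `N` is contained in `P`. -/
lemma radOf_le_of_le_socStep {P N : Submodule R M} (h : N ≤ socStep P) :
    radOf N ≤ P := by
  haveI : IsSemisimpleModule R (socM R (M ⧸ P)) := socM_isSemisimple
  -- the map N → soc (M/P)
  let f : N →ₗ[R] socM R (M ⧸ P) :=
    LinearMap.codRestrict _ (P.mkQ ∘ₗ N.subtype) (fun x => h x.2)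
  have hmap : (radM R ↥N).map f ≤ radM R (socM R (M ⧸ P)) := map_radM_le f
  rw [radM_eq_bot_of_isSemisimple (M := ↥(socM R (M ⧸ P))), le_bot_iff] at hmap
  intro x hx
  rw [radOf] at hx
  obtain ⟨y, hy, rfl⟩ := hx
  have hfy : f y ∈ (radM R ↥N).map f := ⟨y, hy, rfl⟩
  rw [hmap, Submodule.mem_bot] at hfy
  have hz : P.mkQ (N.subtype y) = 0 := congrArg Subtype.val hfy
  simpa [Submodule.Quotient.mk_eq_zero] using hz

/-- Key step (other direction): if the radical of `N` is contained in `P` and `N`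
is Artinian, then `N` is contained in the preimage of the socle of `M/P`. -/
lemma le_socStep_of_radOf_le [IsArtinian R M] {P N : Submodule R M} (h : radOf N ≤ P) :
    N ≤ socStep P := by
  haveI : IsArtinian R ↥N := inferInstance
  haveI : IsSemisimpleModule R (↥N ⧸ radM R ↥N) := quotient_radM_isSemisimple
  let g : N →ₗ[R] M ⧸ P := P.mkQ ∘ₗ N.subtype
  have hker : radM R ↥N ≤ LinearMap.ker g := by
    intro x hx
    have : (x : M) ∈ radOf N := ⟨x, hx, rfl⟩
    have hxP : (x : M) ∈ P := h this
    simp [g, Submodule.Quotient.mk_eq_zero, hxP]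
  -- N ⧸ ker g is a quotient of the semisimple module N ⧸ rad N
  haveI : IsSemisimpleModule R (↥N ⧸ LinearMap.ker g) := by
    have e := Submodule.quotientQuotientEquivQuotient (radM R ↥N) (LinearMap.ker g) hker
    exact IsSemisimpleModule.congr e.symm
  haveI : IsSemisimpleModule R (LinearMap.range g) :=
    IsSemisimpleModule.congr (g.quotKerEquivRange).symm
  have hle : LinearMap.range g ≤ socM R (M ⧸ P) :=
    le_socM_of_isSemisimple (LinearMap.range g)
  intro x hx
  rw [socStep, Submodule.mem_comap]
  exact hle ⟨⟨x, hx⟩, rfl⟩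

end AuxLemmas

section MainClaims

variable {R : Type*} [Ring R] {M : Type*} [AddCommGroup M] [Module R M]

lemma radSeries_le_socSeries_of_soc_top {n : ℕ} (hn : socSeries R M n = ⊤) :
    ∀ i, i ≤ n → radSeries R M i ≤ socSeries R M (n - i) := by
  intro i
  induction i with
  | zero => intro _; simpa [radSeries, Nat.sub_zero, hn] using le_of_eq hn.symm
  | succ i ih =>
    intro hi
    have hi' : i ≤ n := Nat.le_of_succ_le hi
    have h1 : radSeries R M i ≤ socSeries R M (n - i) := ih hi'
    have harith : n - i = (n - (i + 1)) + 1 := by omega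
    rw [harith] at h1
    have h2 : radSeries R M i ≤ socStep (socSeries R M (n - (i + 1))) := h1
    show radOf (radSeries R M i) ≤ socSeries R M (n - (i + 1))
    exact radOf_le_of_le_socStep h2

lemma rad_bot_of_soc_top {n : ℕ} (hn : socSeries R M n = ⊤) : radSeries R M n = ⊥ := by
  have := radSeries_le_socSeries_of_soc_top hn n le_rfl
  simpa [socSeries, le_bot_iff] using this

lemma socSeries_ge_radSeries_of_rad_bot [IsArtinian R M] {n : ℕ}
    (hn : radSeries R M n = ⊥) :
    ∀ i, i ≤ n → radSeries R M (n - i) ≤ socSeries R M i := by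
  intro i
  induction i with
  | zero => intro _; simpa [socSeries, Nat.sub_zero, hn] using le_of_eq hn
  | succ i ih =>
    intro hi
    have hi' : i ≤ n := Nat.le_of_succ_le hi
    have h1 : radSeries R M (n - i) ≤ socSeries R M i := ih hi'
    have harith : n - i = (n - (i + 1)) + 1 := by omega
    rw [harith] at h1
    have h2 : radOf (radSeries R M (n - (i + 1))) ≤ socSeries R M i := h1
    show radSeries R M (n - (i + 1)) ≤ socSeries R M (i + 1)
    rw [socSeries]
    exact le_socStep_of_radOf_le h2

lemma soc_top_of_rad_bot [IsArtinian R M] {n : ℕ} (hn : radSeries R M n = ⊥) :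
    socSeries R M n = ⊤ := by
  have := socSeries_ge_radSeries_of_rad_bot hn n le_rfl
  simpa [radSeries, top_le_iff] using this

end MainClaims

/-- for a module `M` of finite length, the least `n` with `soc^n M = M`
equals the least `n` with `rad^n M = 0` (the Loewy length of `M`). -/
theorem statement7 (R : Type*) [Ring R] (M : Type*) [AddCommGroup M] [Module R M]
    (h : IsFiniteLength R M) :
    sInf {n | socSeries R M n = ⊤} = sInf {n | radSeries R M n = ⊥} := by
  obtain ⟨_, hart⟩ := isFiniteLength_iff_isNoetherian_isArtinian.mp h
  congr 1
  ext n
  exact ⟨fun hn => rad_bot_of_soc_top hn, fun hn => soc_top_of_rad_bot hn⟩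
end

section
/- Let A = ⊕_{i≥0} A_i be a finite-dimensional positively graded algebra over a field with A_0 semisimple and A generated by A_1 over A_0. If a finite-dimensional graded A-module M has simple head (M/rad M simple) and simple socle, then M is rigid: soc^i M = rad^{ℓℓ(M)-i} M for all 0 ≤ i ≤ ℓℓ(M). -/
section Graded

variable {k A : Type*} [Field k] [Ring A] [Algebra k A]

/-- `A_{>0}·L = 0` holds degreewise: every homogeneous element of positive degree
annihilates `L`. -/
def PosPartKills (𝒜 : ℤ → Submodule k A) (L : Type*) [AddCommGroup L] [Module A L] : Prop :=
  ∀ i : ℤ, 0 < i → ∀ a ∈ 𝒜 i, ∀ x : L, a • x = 0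

end Graded


set_option linter.unusedSectionVars false
set_option maxHeartbeats 1000000

namespace S12
open DirectSum

variable {k A M : Type*} [Field k] [Ring A] [Algebra k A]
  (𝒜 : ℤ → Submodule k A) [GradedAlgebra 𝒜]
  [AddCommGroup M] [Module k M] [Module A M] [IsScalarTower k A M]
  (ℳ : ℤ → Submodule k M) [SetLike.GradedSMul 𝒜 ℳ] [DirectSum.Decomposition ℳ]

noncomputable def cmp (n : ℤ) (x : M) : M := (DirectSum.decompose ℳ x n : M)
lemma cmp_mem (n : ℤ) (x : M) : cmp ℳ n x ∈ ℳ n := SetLike.coe_mem _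
noncomputable def cmpL (n : ℤ) : M →ₗ[k] M :=
  (ℳ n).subtype ∘ₗ (DirectSum.component k ℤ (fun i => ℳ i) n) ∘ₗ
    (DirectSum.decomposeLinearEquiv ℳ).toLinearMap
lemma cmpL_apply (n : ℤ) (x : M) : cmpL ℳ n x = cmp ℳ n x := rfl
lemma cmp_sum (n : ℤ) {ι : Type*} (s : Finset ι) (f : ι → M) :
    cmp ℳ n (∑ i ∈ s, f i) = ∑ i ∈ s, cmp ℳ n (f i) := by
  simp only [← cmpL_apply, map_sum]
lemma cmp_of_mem_same {n : ℤ} {x : M} (h : x ∈ ℳ n) : cmp ℳ n x = x :=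
  DirectSum.decompose_of_mem_same ℳ h
lemma cmp_of_mem_ne {i n : ℤ} {x : M} (h : x ∈ ℳ i) (hne : i ≠ n) : cmp ℳ n x = 0 :=
  DirectSum.decompose_of_mem_ne ℳ h hne
lemma exists_finset_cmp (x : M) :
    ∃ s : Finset ℤ, (∀ n, cmp ℳ n x ≠ 0 → n ∈ s) ∧ ∑ n ∈ s, cmp ℳ n x = x := by
  classical
  refine ⟨(DirectSum.decompose ℳ x).support, fun n hn => ?_, DirectSum.sum_support_decompose ℳ x⟩
  rw [DFinsupp.mem_support_iff]
  intro h0; apply hn; unfold cmp; rw [h0]; rfl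
lemma smul_piece_mem {p q : ℤ} {a : A} {x : M} (ha : a ∈ 𝒜 p) (hx : x ∈ ℳ q) :
    a • x ∈ ℳ (p + q) := SetLike.GradedSMul.smul_mem ha hx

/-- Key: the degree-`n` component of `a • x` for homogeneous `a` of degree `p`. -/
lemma cmp_smul_homog {p : ℤ} {a : A} (ha : a ∈ 𝒜 p) (x : M) (n : ℤ) :
    cmp ℳ n (a • x) = a • cmp ℳ (n - p) x := by
  classical
  obtain ⟨s, hs, hsum⟩ := exists_finset_cmp ℳ x
  conv_lhs => rw [← hsum]
  rw [Finset.smul_sum, cmp_sum]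
  by_cases hmem : n - p ∈ s
  · rw [Finset.sum_eq_single_of_mem (n - p) hmem]
    · apply cmp_of_mem_same
      have h2 := smul_piece_mem 𝒜 ℳ ha (cmp_mem ℳ (n - p) x)
      rwa [show p + (n - p) = n by omega] at h2
    · intro q hq hqne
      exact cmp_of_mem_ne ℳ (smul_piece_mem 𝒜 ℳ ha (cmp_mem ℳ q x)) (by omega)
  · have hz : cmp ℳ (n - p) x = 0 := by
      by_contra h; exact hmem (hs _ h)
    rw [hz, smul_zero]
    exact Finset.sum_eq_zero fun q hq =>
      cmp_of_mem_ne ℳ (smul_piece_mem 𝒜 ℳ ha (cmp_mem ℳ q x)) (by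
        intro hpq
        apply hmem
        have : q = n - p := by omega
        rwa [← this])

/-- Decomposition of `cmp n (a • x)` over the components of `a`. -/
lemma cmp_smul (a : A) (x : M) (n : ℤ) :
    ∃ s : Finset ℤ, (∀ p, cmp 𝒜 p a ≠ 0 → p ∈ s) ∧
      cmp ℳ n (a • x) = ∑ p ∈ s, (cmp 𝒜 p a) • cmp ℳ (n - p) x := by
  obtain ⟨s, hs, hsum⟩ := exists_finset_cmp 𝒜 a
  refine ⟨s, hs, ?_⟩
  conv_lhs => rw [← hsum]
  rw [Finset.sum_smul, cmp_sum]
  exact Finset.sum_congr rfl fun p _ => cmp_smul_homog 𝒜 ℳ (cmp_mem 𝒜 p a) x n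

lemma cmp_add (n : ℤ) (x y : M) : cmp ℳ n (x + y) = cmp ℳ n x + cmp ℳ n y := by
  rw [← cmpL_apply, ← cmpL_apply, ← cmpL_apply, map_add]

lemma cmp_zero' (n : ℤ) : cmp ℳ n (0 : M) = 0 := by
  rw [← cmpL_apply, map_zero]

lemma eq_zero_of_cmp (x : M) (h : ∀ n, cmp ℳ n x = 0) : x = 0 := by
  obtain ⟨s, _, hsum⟩ := exists_finset_cmp ℳ x
  rw [← hsum]
  exact Finset.sum_eq_zero fun n _ => h n

lemma finite_support [FiniteDimensional k M] : {i : ℤ | ℳ i ≠ ⊥}.Finite := by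
  have hind : iSupIndep ℳ := (DirectSum.Decomposition.isInternal ℳ).submodule_iSupIndep
  haveI : Fintype {i : ℤ // ℳ i ≠ ⊥} := hind.fintypeNeBotOfFiniteDimensional
  rw [show {i : ℤ | ℳ i ≠ ⊥} = Set.range (fun x : {i : ℤ // ℳ i ≠ ⊥} => (x : ℤ)) from
    (Subtype.range_coe_subtype).symm]
  exact Set.finite_range _

lemma exists_degree_bound [FiniteDimensional k M] :
    ∃ D : ℤ, 0 ≤ D ∧ ∀ i, D < i → ℳ i = ⊥ := by
  obtain ⟨b, hb⟩ := (finite_support ℳ).bddAbove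
  refine ⟨max b 0, le_max_right _ _, fun i hi => ?_⟩
  by_contra h
  have h2 : i ≤ b := hb (show i ∈ {i : ℤ | ℳ i ≠ ⊥} from h)
  have h3 : b ≤ max b 0 := le_max_left b 0
  omega

variable (hpos : ∀ i : ℤ, i < 0 → 𝒜 i = ⊥)
include hpos

lemma cmp_eq_zero_of_neg {p : ℤ} (hp : p < 0) (a : A) : cmp 𝒜 p a = 0 := by
  have h := cmp_mem 𝒜 p a
  rw [hpos p hp] at h
  simpa using h

/-- The `A`-submodule of elements of `M` supported in degrees `≥ d`. -/
noncomputable def mge (d : ℤ) : Submodule A M where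
  carrier := {x | ∀ n, n < d → cmp ℳ n x = 0}
  add_mem' := fun hx hy n hn => by
    rw [cmp_add, hx n hn, hy n hn, add_zero]
  zero_mem' := fun n _ => cmp_zero' ℳ n
  smul_mem' := by
    intro a x hx n hn
    obtain ⟨s, -, heq⟩ := cmp_smul 𝒜 ℳ a x n
    rw [heq]
    refine Finset.sum_eq_zero fun p _ => ?_
    rcases lt_or_ge p 0 with h | h
    · rw [cmp_eq_zero_of_neg 𝒜 hpos h, zero_smul]
    · rw [hx (n - p) (by omega), smul_zero]

lemma mem_mge_iff {d : ℤ} {x : M} : x ∈ mge 𝒜 ℳ hpos d ↔ ∀ n, n < d → cmp ℳ n x = 0 :=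
  Iff.rfl

lemma mge_antitone {d e : ℤ} (h : d ≤ e) : mge 𝒜 ℳ hpos e ≤ mge 𝒜 ℳ hpos d :=
  fun _ hx n hn => hx n (by omega)

lemma mem_mge_of_piece {d i : ℤ} {x : M} (hx : x ∈ ℳ i) (h : d ≤ i) : x ∈ mge 𝒜 ℳ hpos d :=
  fun n hn => cmp_of_mem_ne ℳ hx (by omega)

lemma cmp_mem_mge {d : ℤ} (n : ℤ) {x : M} (h : d ≤ n) : cmp ℳ n x ∈ mge 𝒜 ℳ hpos d :=
  mem_mge_of_piece 𝒜 ℳ hpos (cmp_mem ℳ n x) h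

lemma mge_eq_top {d : ℤ} (h : ∀ i, i < d → ℳ i = ⊥) : mge 𝒜 ℳ hpos d = ⊤ := by
  rw [eq_top_iff]
  intro x _ n hn
  have hm := cmp_mem ℳ n x
  rw [h n hn] at hm
  simpa using hm

lemma mge_eq_bot {d : ℤ} (h : ∀ i, d ≤ i → ℳ i = ⊥) : mge 𝒜 ℳ hpos d = ⊥ := by
  rw [eq_bot_iff]
  intro x hx
  rw [Submodule.mem_bot]
  refine eq_zero_of_cmp ℳ x fun n => ?_
  rcases lt_or_ge n d with hl | hl
  · exact hx n hl
  · have hm := cmp_mem ℳ n x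
    rw [h n hl] at hm
    simpa using hm

/-- The left ideal of elements of `A` supported in degrees `≥ e`. -/
noncomputable def age : ℤ → Submodule A A := mge 𝒜 𝒜 hpos

lemma mem_age_zero (b : A) : b ∈ age 𝒜 hpos 0 :=
  fun n hn => cmp_eq_zero_of_neg 𝒜 hpos hn b

lemma piece_le_age {e i : ℤ} {a : A} (ha : a ∈ 𝒜 i) (h : e ≤ i) : a ∈ age 𝒜 hpos e :=
  mem_mge_of_piece 𝒜 𝒜 hpos ha h

lemma smul_mge {e d : ℤ} {a : A} {x : M} (ha : a ∈ age 𝒜 hpos e) (hx : x ∈ mge 𝒜 ℳ hpos d) :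
    a • x ∈ mge 𝒜 ℳ hpos (e + d) := by
  intro n hn
  obtain ⟨s, -, heq⟩ := cmp_smul 𝒜 ℳ a x n
  rw [heq]
  refine Finset.sum_eq_zero fun p _ => ?_
  rcases lt_or_ge p e with h | h
  · rw [ha p h, zero_smul]
  · rw [hx (n - p) (by omega), smul_zero]

lemma mul_age {p q : ℤ} {a b : A} (ha : a ∈ age 𝒜 hpos p) (hb : b ∈ age 𝒜 hpos q) :
    a * b ∈ age 𝒜 hpos (p + q) := by
  rw [← smul_eq_mul]
  exact smul_mge 𝒜 𝒜 hpos ha hb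

lemma age_kills [FiniteDimensional k A] :
    ∃ D : ℤ, 0 ≤ D ∧ ∀ a ∈ age 𝒜 hpos (D + 1), a = 0 := by
  obtain ⟨D, hD0, hD⟩ := exists_degree_bound 𝒜
  refine ⟨D, hD0, fun a ha => ?_⟩
  have : age 𝒜 hpos (D + 1) = ⊥ := mge_eq_bot 𝒜 𝒜 hpos fun i hi => hD i (by omega)
  rw [this] at ha
  simpa using ha

section ModuleTheory

variable [FiniteDimensional k A]

lemma age_smul_span_mem {n : ℤ} {a : A} (ha : a ∈ age 𝒜 hpos 1) (Q : Type*) [AddCommGroup Q]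
    [Module A Q] {y : Q}
    (hy : y ∈ Submodule.span A {y : Q | ∃ c ∈ age 𝒜 hpos n, ∃ x : Q, y = c • x}) :
    a • y ∈ Submodule.span A {y : Q | ∃ c ∈ age 𝒜 hpos (n + 1), ∃ x : Q, y = c • x} := by
  have main : ∀ y ∈ Submodule.span A {y : Q | ∃ c ∈ age 𝒜 hpos n, ∃ x : Q, y = c • x},
      ∀ a' ∈ age 𝒜 hpos 1,
      a' • y ∈ Submodule.span A {y : Q | ∃ c ∈ age 𝒜 hpos (n + 1), ∃ x : Q, y = c • x} := by
    intro y hy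
    induction hy using Submodule.span_induction with
    | mem y h =>
      obtain ⟨c, hc, x, rfl⟩ := h
      intro a' ha'
      rw [← mul_smul]
      refine Submodule.subset_span ⟨a' * c, ?_, x, rfl⟩
      have := mul_age 𝒜 hpos ha' hc
      rwa [show (1 : ℤ) + n = n + 1 by ring] at this
    | zero => intro a' _; rw [smul_zero]; exact zero_mem _
    | add u v _ _ hu hv => intro a' ha'; rw [smul_add]; exact add_mem (hu a' ha') (hv a' ha')
    | smul b u _ hu =>
      intro a' ha'
      rw [← mul_smul]
      have hab : a' * b ∈ age 𝒜 hpos 1 := by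
        have := mul_age 𝒜 hpos ha' (mem_age_zero 𝒜 hpos b)
        rwa [add_zero] at this
      exact hu (a' * b) hab
  exact main y hy a ha

lemma simple_killed (Q : Type*) [AddCommGroup Q] [Module A Q] [IsSimpleModule A Q]
    {a : A} (ha : a ∈ age 𝒜 hpos 1) (s : Q) : a • s = 0 := by
  classical
  set T : ℕ → Submodule A Q := fun n =>
    Submodule.span A {y : Q | ∃ c ∈ age 𝒜 hpos (n : ℤ), ∃ x : Q, y = c • x} with hT
  have hstep : ∀ m : ℕ, T 1 = ⊤ → T (m + 1) = ⊤ → T (m + 2) = ⊤ := by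
    intro m h1 hm
    rw [eq_top_iff, ← h1]
    rw [Submodule.span_le]
    rintro y ⟨c, hc, x, rfl⟩
    have hx : x ∈ T (m + 1) := hm ▸ Submodule.mem_top
    have := age_smul_span_mem 𝒜 hpos hc Q hx
    rw [show ((m + 1 : ℕ) : ℤ) + 1 = ((m + 2 : ℕ) : ℤ) by push_cast; ring] at this
    exact this
  have hall : T 1 = ⊤ → ∀ m : ℕ, T (m + 1) = ⊤ := by
    intro h1 m
    induction m with
    | zero => exact h1
    | succ p ih => exact hstep p h1 ih
  obtain ⟨D, hD0, hD⟩ := age_kills 𝒜 hpos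
  have hbot : T (D.toNat + 1) = ⊥ := by
    rw [hT]
    rw [eq_bot_iff, Submodule.span_le]
    rintro y ⟨c, hc, x, rfl⟩
    have hc0 : c = 0 := by
      apply hD
      rwa [show ((D.toNat + 1 : ℕ) : ℤ) = D + 1 by omega] at hc
    rw [hc0, zero_smul]
    exact Submodule.zero_mem ⊥
  have hT1 : T 1 ≠ ⊤ := by
    intro h1
    have := hall h1 D.toNat
    rw [hbot] at this
    exact bot_ne_top this
  have hT1b : T 1 = ⊥ := (eq_bot_or_eq_top (T 1)).resolve_right hT1
  have : a • s ∈ T 1 := Submodule.subset_span ⟨a, by exact_mod_cast ha, s, rfl⟩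
  rw [hT1b] at this
  simpa using this

/-- The inclusion of the degree-zero part as a ring hom. -/
noncomputable def A0hom : ↥(𝒜 0) →+* A := (SetLike.GradeZero.subring 𝒜).subtype

lemma smul_eq_cmp0 (Q : Type*) [AddCommGroup Q] [Module A Q]
    (hkill : ∀ a ∈ age 𝒜 hpos 1, ∀ x : Q, a • x = 0) (a : A) (x : Q) :
    a • x = (cmp 𝒜 0 a) • x := by
  classical
  obtain ⟨s, hs, hsum⟩ := exists_finset_cmp 𝒜 a
  conv_lhs => rw [← hsum, Finset.sum_smul]
  by_cases h0 : (0 : ℤ) ∈ s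
  · rw [Finset.sum_eq_single_of_mem 0 h0]
    intro p _ hp
    rcases lt_or_ge p 0 with h | h
    · rw [cmp_eq_zero_of_neg 𝒜 hpos h, zero_smul]
    · exact hkill _ (piece_le_age 𝒜 hpos (cmp_mem 𝒜 p a) (by omega)) x
  · have hz : cmp 𝒜 0 a = 0 := by by_contra h; exact h0 (hs _ h)
    rw [hz, zero_smul]
    refine Finset.sum_eq_zero fun p hp => ?_
    rcases lt_or_ge p 0 with h | h
    · rw [cmp_eq_zero_of_neg 𝒜 hpos h, zero_smul]
    · have h1 : 1 ≤ p := by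
        rcases eq_or_lt_of_le h with h' | h'
        · exact absurd hp (h' ▸ h0)
        · omega
      exact hkill _ (piece_le_age 𝒜 hpos (cmp_mem 𝒜 p a) h1) x

lemma killed_semisimple (hss : IsSemisimpleRing ↥(𝒜 0)) (Q : Type*) [AddCommGroup Q] [Module A Q]
    (hkill : ∀ a ∈ age 𝒜 hpos 1, ∀ x : Q, a • x = 0) : IsSemisimpleModule A Q := by
  letI : Module ↥(𝒜 0) Q := Module.compHom Q (A0hom 𝒜)
  haveI : IsSemisimpleModule ↥(𝒜 0) Q := by haveI := hss; infer_instance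
  refine (isSemisimpleModule_iff A Q).mpr ⟨?_⟩
  intro P
  let P0 : Submodule ↥(𝒜 0) Q :=
    { carrier := P
      add_mem' := fun ha hb => P.add_mem ha hb
      zero_mem' := P.zero_mem
      smul_mem' := fun c x hx => P.smul_mem (A0hom 𝒜 c) hx }
  obtain ⟨C0, hC0⟩ := exists_isCompl P0
  let C : Submodule A Q :=
    { carrier := C0
      add_mem' := fun ha hb => C0.add_mem ha hb
      zero_mem' := C0.zero_mem
      smul_mem' := fun a x hx => by
        have : a • x = (cmp 𝒜 0 a) • x := smul_eq_cmp0 𝒜 hpos Q hkill a x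
        rw [this]
        exact C0.smul_mem ⟨cmp 𝒜 0 a, cmp_mem 𝒜 0 a⟩ hx }
  refine ⟨C, ?_, ?_⟩
  · rw [disjoint_iff, eq_bot_iff]
    intro x hx
    have : x ∈ P0 ⊓ C0 := ⟨hx.1, hx.2⟩
    rw [hC0.inf_eq_bot] at this
    exact this
  · rw [codisjoint_iff, eq_top_iff]
    intro x _
    have hx : x ∈ P0 ⊔ C0 := by rw [hC0.sup_eq_top]; trivial
    obtain ⟨p, hp, c, hc, rfl⟩ := Submodule.mem_sup.mp hx
    exact Submodule.add_mem_sup hp hc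

end ModuleTheory

section RadSoc

variable [FiniteDimensional k A]

lemma rad_eq_bot_of_killed (hss : IsSemisimpleRing ↥(𝒜 0)) (Q : Type*) [AddCommGroup Q]
    [Module A Q] [IsNoetherian A Q]
    (hkill : ∀ a ∈ age 𝒜 hpos 1, ∀ x : Q, a • x = 0) : radM A Q = ⊥ := by
  haveI := killed_semisimple 𝒜 hpos hss Q hkill
  rw [eq_bot_iff]
  intro x hx
  rw [Submodule.mem_bot]
  by_contra hx0
  set X := Submodule.span A {x} with hX
  obtain ⟨C, hC⟩ := exists_isCompl X
  have hxX : x ∈ X := Submodule.mem_span_singleton_self x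
  have hCne : C ≠ ⊤ := by
    intro h
    apply hx0
    have hle : X ≤ X ⊓ C := le_inf le_rfl (h ▸ le_top)
    rw [hC.inf_eq_bot] at hle
    simpa using hle hxX
  haveI : IsCoatomic (Submodule A Q) := isCoatomic_of_orderTop_gt_wellFounded wellFounded_gt
  rcases (IsCoatomic.eq_top_or_exists_le_coatom C) with h | ⟨C', hC', hle⟩
  · exact hCne h
  · have hxC' : x ∉ C' := by
      intro hxc
      apply hC'.1
      rw [eq_top_iff, ← hC.sup_eq_top]
      refine sup_le ?_ hle
      rwa [hX, Submodule.span_le, Set.singleton_subset_iff]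
    exact hxC' ((sInf_le (show C' ∈ {m : Submodule A Q | IsCoatom m} from hC')) hx)

lemma isCoatom_comap_mkQ (Q : Type*) [AddCommGroup Q] [Module A Q] (J : Submodule A Q)
    {C : Submodule A (Q ⧸ J)} (hC : IsCoatom C) : IsCoatom (C.comap J.mkQ) := by
  have hJle : J ≤ C.comap J.mkQ := by
    intro y hy
    rw [Submodule.mem_comap, Submodule.mkQ_apply, (Submodule.Quotient.mk_eq_zero J).mpr hy]
    exact C.zero_mem
  constructor
  · intro h
    apply hC.1
    rw [eq_top_iff]
    intro y _
    obtain ⟨x, rfl⟩ := J.mkQ_surjective y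
    exact (h ▸ Submodule.mem_top : x ∈ C.comap J.mkQ)
  · intro X hX
    have hJX : J ≤ X := le_trans hJle hX.le
    have hXeq : Submodule.comap J.mkQ (Submodule.map J.mkQ X) = X := by
      rw [Submodule.comap_map_eq, Submodule.ker_mkQ, sup_eq_left.mpr hJX]
    have hCeq : Submodule.map J.mkQ (C.comap J.mkQ) = C := by
      rw [Submodule.map_comap_eq, Submodule.range_mkQ, top_inf_eq]
    have hlt : C < Submodule.map J.mkQ X := by
      rw [← hCeq]
      rcases lt_or_eq_of_le (Submodule.map_mono (f := J.mkQ) hX.le) with h | h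
      · exact h
      · exfalso
        have h2 := congrArg (Submodule.comap J.mkQ) h
        rw [hXeq, Submodule.comap_map_eq, Submodule.ker_mkQ, sup_eq_left.mpr hJle] at h2
        exact hX.ne h2
    have := hC.2 _ hlt
    rw [← hXeq, this, Submodule.comap_top]

lemma radM_eq (hss : IsSemisimpleRing ↥(𝒜 0)) (Q : Type*) [AddCommGroup Q]
    [Module A Q] [IsNoetherian A Q] :
    radM A Q = Submodule.span A {y : Q | ∃ a ∈ age 𝒜 hpos 1, ∃ x : Q, y = a • x} := by
  set J := Submodule.span A {y : Q | ∃ a ∈ age 𝒜 hpos 1, ∃ x : Q, y = a • x} with hJ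
  apply le_antisymm
  · have hkill : ∀ a ∈ age 𝒜 hpos 1, ∀ q : Q ⧸ J, a • q = 0 := by
      intro a ha q
      obtain ⟨x, rfl⟩ := J.mkQ_surjective q
      rw [← LinearMap.map_smul J.mkQ a x, Submodule.mkQ_apply, Submodule.Quotient.mk_eq_zero]
      exact Submodule.subset_span ⟨a, ha, x, rfl⟩
    have hradQ : radM A (Q ⧸ J) = ⊥ := rad_eq_bot_of_killed 𝒜 hpos hss _ hkill
    have hle : radM A Q ≤ Submodule.comap J.mkQ (radM A (Q ⧸ J)) := by
      intro x hx
      rw [Submodule.mem_comap, radM, Submodule.mem_sInf]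
      intro C hC
      rw [radM, Submodule.mem_sInf] at hx
      exact hx _ (isCoatom_comap_mkQ 𝒜 hpos Q J hC)
    rw [hradQ] at hle
    rwa [Submodule.comap_bot, Submodule.ker_mkQ] at hle
  · rw [Submodule.span_le]
    rintro y ⟨a, ha, x, rfl⟩
    rw [SetLike.mem_coe, radM, Submodule.mem_sInf]
    intro C hC
    haveI : IsSimpleModule A (Q ⧸ C) := isSimpleModule_iff_isCoatom.mpr hC
    have h1 : a • (C.mkQ x) = 0 := simple_killed 𝒜 hpos (Q ⧸ C) ha (C.mkQ x)
    rw [← LinearMap.map_smul C.mkQ a x, Submodule.mkQ_apply, Submodule.Quotient.mk_eq_zero] at h1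
    exact h1

/-- The annihilator of the positive part, as a submodule. -/
noncomputable def annAge (Q : Type*) [AddCommGroup Q] [Module A Q] : Submodule A Q where
  carrier := {x | ∀ a ∈ age 𝒜 hpos 1, a • x = 0}
  add_mem' := fun hx hy a ha => by rw [smul_add, hx a ha, hy a ha, add_zero]
  zero_mem' := fun a _ => smul_zero a
  smul_mem' := by
    intro b x hx a ha
    rw [← mul_smul]
    have hab : a * b ∈ age 𝒜 hpos 1 := by
      have := mul_age 𝒜 hpos ha (mem_age_zero 𝒜 hpos b)
      rwa [add_zero] at this
    exact hx _ hab

lemma mem_annAge {Q : Type*} [AddCommGroup Q] [Module A Q] {x : Q} :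
    x ∈ annAge 𝒜 hpos Q ↔ ∀ a ∈ age 𝒜 hpos 1, a • x = 0 := Iff.rfl

lemma socM_eq (hss : IsSemisimpleRing ↥(𝒜 0)) (Q : Type*) [AddCommGroup Q] [Module A Q] :
    socM A Q = annAge 𝒜 hpos Q := by
  apply le_antisymm
  · rw [socM]
    refine sSup_le fun P hP => ?_
    haveI : IsSimpleModule A ↥P := hP
    intro x hx a ha
    have h1 : a • (⟨x, hx⟩ : ↥P) = 0 := simple_killed 𝒜 hpos ↥P ha _
    have := congrArg (Subtype.val) h1
    simpa using this
  · set W := annAge 𝒜 hpos Q with hW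
    have hkillW : ∀ a ∈ age 𝒜 hpos 1, ∀ w : ↥W, a • w = 0 := by
      intro a ha w
      apply Subtype.ext
      have : (↑(a • w) : Q) = a • (w : Q) := rfl
      rw [this, w.2 a ha]
      rfl
    haveI := killed_semisimple 𝒜 hpos hss ↥W hkillW
    have htop := IsSemisimpleModule.sSup_simples_eq_top A ↥W
    have : W = Submodule.map W.subtype ⊤ := (Submodule.map_subtype_top W).symm
    rw [this, ← htop, sSup_eq_iSup', Submodule.map_iSup]
    refine iSup_le fun P => ?_
    refine le_sSup ?_
    haveI : IsSimpleModule A ↥(P : Submodule A ↥W) := P.2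
    exact IsSimpleModule.congr (Submodule.equivMapOfInjective W.subtype W.injective_subtype
      (P : Submodule A ↥W)).symm

lemma mem_socStep_iff (hss : IsSemisimpleRing ↥(𝒜 0)) (N : Submodule A M) (x : M) :
    x ∈ socStep N ↔ ∀ a ∈ age 𝒜 hpos 1, a • x ∈ N := by
  rw [socStep, Submodule.mem_comap, socM_eq 𝒜 hpos hss, mem_annAge]
  constructor
  · intro h a ha
    have := h a ha
    rwa [← LinearMap.map_smul N.mkQ a x, Submodule.mkQ_apply, Submodule.Quotient.mk_eq_zero] at this
  · intro h a ha
    rw [← LinearMap.map_smul N.mkQ a x, Submodule.mkQ_apply, Submodule.Quotient.mk_eq_zero]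
    exact h a ha

end RadSoc

section Series

variable [FiniteDimensional k A]

lemma right_gen (hgen : ∀ i : ℤ, 0 ≤ i → 𝒜 (i + 1) = 𝒜 1 * 𝒜 i) :
    ∀ p : ℤ, 1 ≤ p → ∀ q : ℤ, 1 ≤ q → 𝒜 (p + q) = 𝒜 p * 𝒜 q := by
  have claim0 : ∀ p : ℤ, 1 ≤ p → 𝒜 (p + 1) = 𝒜 p * 𝒜 1 := by
    intro p hp
    refine Int.le_induction (motive := fun p _ => 𝒜 (p + 1) = 𝒜 p * 𝒜 1) (hgen 1 (by norm_num)) ?_ p hp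
    intro p hp ih
    calc 𝒜 (p + 1 + 1) = 𝒜 1 * 𝒜 (p + 1) := hgen (p + 1) (by omega)
      _ = 𝒜 1 * (𝒜 p * 𝒜 1) := by rw [ih]
      _ = (𝒜 1 * 𝒜 p) * 𝒜 1 := (mul_assoc _ _ _).symm
      _ = 𝒜 (p + 1) * 𝒜 1 := by rw [← hgen p (by omega)]
  intro p hp q hq
  refine Int.le_induction (motive := fun q _ => 𝒜 (p + q) = 𝒜 p * 𝒜 q) (claim0 p hp) ?_ q hq
  intro q hq ih
  calc 𝒜 (p + (q + 1)) = 𝒜 ((p + q) + 1) := by ring_nf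
    _ = 𝒜 (p + q) * 𝒜 1 := claim0 (p + q) (by omega)
    _ = (𝒜 p * 𝒜 q) * 𝒜 1 := by rw [ih]
    _ = 𝒜 p * (𝒜 q * 𝒜 1) := mul_assoc _ _ _
    _ = 𝒜 p * 𝒜 (q + 1) := by rw [← claim0 q hq]

lemma ckill_one (hss : IsSemisimpleRing ↥(𝒜 0)) :
    ∀ n : ℕ, 1 ≤ n → ∀ c ∈ 𝒜 1, ∀ x ∈ socSeries A M n, c • x ∈ socSeries A M (n - 1) := by
  intro n hn c hc x hx
  obtain ⟨m, rfl⟩ : ∃ m, n = m + 1 := ⟨n - 1, by omega⟩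
  have hx' : x ∈ socStep (socSeries A M m) := hx
  rw [mem_socStep_iff 𝒜 hpos hss] at hx'
  have := hx' c (piece_le_age 𝒜 hpos hc le_rfl)
  simpa using this

lemma ckill (hss : IsSemisimpleRing ↥(𝒜 0)) (hgen : ∀ i : ℤ, 0 ≤ i → 𝒜 (i + 1) = 𝒜 1 * 𝒜 i) :
    ∀ i : ℕ, ∀ n : ℕ, i + 1 ≤ n → ∀ c ∈ 𝒜 ((i + 1 : ℕ) : ℤ), ∀ x ∈ socSeries A M n,
      c • x ∈ socSeries A M (n - (i + 1)) := by
  intro i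
  induction i with
  | zero =>
    intro n hn c hc x hx
    exact ckill_one 𝒜 hpos hss n hn c (by exact_mod_cast hc) x hx
  | succ i ih =>
    intro n hn c hc x hx
    have hfac : 𝒜 ((i + 1 + 1 : ℕ) : ℤ) = 𝒜 ((i + 1 : ℕ) : ℤ) * 𝒜 1 := by
      have h := right_gen 𝒜 hpos hgen ((i + 1 : ℕ) : ℤ) (by exact_mod_cast Nat.succ_le_succ (Nat.zero_le i)) 1 le_rfl
      rw [show ((i + 1 : ℕ) : ℤ) + 1 = ((i + 1 + 1 : ℕ) : ℤ) by push_cast; ring] at h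
      exact h
    rw [hfac] at hc
    refine Submodule.mul_induction_on hc ?_ ?_
    · intro e he a haa
      rw [mul_smul]
      have h1 : a • x ∈ socSeries A M (n - 1) := ckill_one 𝒜 hpos hss n (by omega) a haa x hx
      have h2 := ih (n - 1) (by omega) e he _ h1
      rw [show n - 1 - (i + 1) = n - (i + 1 + 1) by omega] at h2
      exact h2
    · intro c1 c2 h1 h2
      rw [add_smul]
      exact Submodule.add_mem _ h1 h2

lemma socSeries_graded (hss : IsSemisimpleRing ↥(𝒜 0)) :
    ∀ n : ℕ, ∀ x ∈ socSeries A M n, ∀ t : ℤ, cmp ℳ t x ∈ socSeries A M n := by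
  intro n
  induction n with
  | zero =>
    intro x hx t
    rw [show socSeries A M 0 = ⊥ from rfl, Submodule.mem_bot] at hx ⊢
    rw [hx, cmp_zero' ℳ t]
  | succ n ih =>
    intro x hx t
    show cmp ℳ t x ∈ socStep (socSeries A M n)
    rw [mem_socStep_iff 𝒜 hpos hss]
    intro a ha
    obtain ⟨s, hs, hsum⟩ := exists_finset_cmp 𝒜 a
    have : a • cmp ℳ t x = ∑ p ∈ s, (cmp 𝒜 p a) • cmp ℳ t x := by
      conv_lhs => rw [← hsum, Finset.sum_smul]
    rw [this]
    refine Submodule.sum_mem _ fun p _ => ?_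
    rcases lt_or_ge p 1 with hlow | hp1
    · rw [ha p hlow, zero_smul]; exact Submodule.zero_mem _
    · have hax : (cmp 𝒜 p a) • x ∈ socSeries A M n := by
        have hx' : x ∈ socStep (socSeries A M n) := hx
        rw [mem_socStep_iff 𝒜 hpos hss] at hx'
        exact hx' _ (piece_le_age 𝒜 hpos (cmp_mem 𝒜 p a) hp1)
      have heq : (cmp 𝒜 p a) • cmp ℳ t x = cmp ℳ (p + t) ((cmp 𝒜 p a) • x) := by
        rw [cmp_smul_homog 𝒜 ℳ (cmp_mem 𝒜 p a) x (p + t), show p + t - p = t by ring]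
      rw [heq]
      exact ih _ hax (p + t)

end Series

section Series2

variable [FiniteDimensional k A]

lemma age_smul_span (p n : ℤ) (s : Set M) {a : A} (ha : a ∈ age 𝒜 hpos p) {w : M}
    (hw : w ∈ Submodule.span A {y : M | ∃ c ∈ age 𝒜 hpos n, ∃ z ∈ s, y = c • z}) :
    a • w ∈ Submodule.span A {y : M | ∃ c ∈ age 𝒜 hpos (p + n), ∃ z ∈ s, y = c • z} := by
  have main : ∀ w ∈ Submodule.span A {y : M | ∃ c ∈ age 𝒜 hpos n, ∃ z ∈ s, y = c • z},
      ∀ a' ∈ age 𝒜 hpos p,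
      a' • w ∈ Submodule.span A {y : M | ∃ c ∈ age 𝒜 hpos (p + n), ∃ z ∈ s, y = c • z} := by
    intro w hw
    induction hw using Submodule.span_induction with
    | mem y h =>
      obtain ⟨c, hc, z, hz, rfl⟩ := h
      intro a' ha'
      rw [← mul_smul]
      exact Submodule.subset_span ⟨a' * c, mul_age 𝒜 hpos ha' hc, z, hz, rfl⟩
    | zero => intro a' _; rw [smul_zero]; exact Submodule.zero_mem _
    | add u v _ _ hu hv => intro a' ha'; rw [smul_add]; exact Submodule.add_mem _ (hu a' ha') (hv a' ha')
    | smul b u _ hu =>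
      intro a' ha'
      rw [← mul_smul]
      have hab : a' * b ∈ age 𝒜 hpos p := by
        have := mul_age 𝒜 hpos ha' (mem_age_zero 𝒜 hpos b)
        rwa [add_zero] at this
      exact hu (a' * b) hab
  exact main w hw a ha

lemma cmp_span_piece (j : ℤ) :
    ∀ x ∈ Submodule.span A (ℳ j : Set M), ∀ t : ℤ,
      cmp ℳ t x ∈ Submodule.span A
        {y : M | ∃ c ∈ age 𝒜 hpos (t - j), ∃ z ∈ (ℳ j : Set M), y = c • z} := by
  intro x hx
  induction hx using Submodule.span_induction with
  | mem z hz =>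
    intro t
    by_cases ht : t = j
    · subst ht
      rw [cmp_of_mem_same ℳ hz]
      refine Submodule.subset_span ⟨1, ?_, z, hz, (one_smul A z).symm⟩
      rw [sub_self]
      exact mem_age_zero 𝒜 hpos 1
    · rw [cmp_of_mem_ne ℳ hz (fun h => ht h.symm)]
      exact Submodule.zero_mem _
  | zero => intro t; rw [cmp_zero' ℳ t]; exact Submodule.zero_mem _
  | add u v _ _ hu hv => intro t; rw [cmp_add]; exact Submodule.add_mem _ (hu t) (hv t)
  | smul a u _ hu =>
    intro t
    obtain ⟨s, -, heq⟩ := cmp_smul 𝒜 ℳ a u t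
    rw [heq]
    refine Submodule.sum_mem _ fun p _ => ?_
    have h1 := age_smul_span 𝒜 hpos p (t - p - j) (ℳ j : Set M)
      (piece_le_age 𝒜 hpos (cmp_mem 𝒜 p a) le_rfl) (hu (t - p))
    rwa [show p + (t - p - j) = t - j by ring] at h1

lemma top_gen (hss : IsSemisimpleRing ↥(𝒜 0))
    (hhd : IsSimpleModule A (M ⧸ radM A M)) [IsNoetherian A M]
    (j : ℤ) (hjbot : ∀ i, i < j → ℳ i = ⊥) (hjne : ℳ j ≠ ⊥) :
    Submodule.span A (ℳ j : Set M) = ⊤ := by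
  by_contra hne
  have hmgetop : mge 𝒜 ℳ hpos j = ⊤ := mge_eq_top 𝒜 ℳ hpos hjbot
  have hradle : radM A M ≤ mge 𝒜 ℳ hpos (j + 1) := by
    rw [radM_eq 𝒜 hpos hss M, Submodule.span_le]
    rintro y ⟨a, ha, x, rfl⟩
    have hx : x ∈ mge 𝒜 ℳ hpos j := hmgetop ▸ Submodule.mem_top
    have := smul_mge 𝒜 ℳ hpos ha hx
    rwa [show (1 : ℤ) + j = j + 1 by ring] at this
  haveI : IsCoatomic (Submodule A M) := isCoatomic_of_orderTop_gt_wellFounded wellFounded_gt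
  rcases IsCoatomic.eq_top_or_exists_le_coatom (Submodule.span A (ℳ j : Set M)) with h | ⟨C, hC, hle⟩
  · exact hne h
  · have hradC : radM A M ≤ C := sInf_le (show C ∈ {m : Submodule A M | IsCoatom m} from hC)
    have hradCoatom : IsCoatom (radM A M) := isSimpleModule_iff_isCoatom.mp hhd
    have hCeq : C = radM A M := by
      by_contra hne2
      have : radM A M < C := lt_of_le_of_ne hradC (fun h => hne2 h.symm)
      exact hC.1 (hradCoatom.2 C this)
    obtain ⟨z, hz, hz0⟩ := (Submodule.ne_bot_iff (ℳ j)).mp hjne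
    have hzW : z ∈ mge 𝒜 ℳ hpos (j + 1) :=
      hradle (hCeq ▸ hle (Submodule.subset_span hz))
    exact hz0 (by have := hzW j (by omega); rwa [cmp_of_mem_same ℳ hz] at this)

lemma mge_succ_le_JN (hss : IsSemisimpleRing ↥(𝒜 0))
    (hgen : ∀ i : ℤ, 0 ≤ i → 𝒜 (i + 1) = 𝒜 1 * 𝒜 i)
    (hhd : IsSimpleModule A (M ⧸ radM A M)) [IsNoetherian A M]
    (j : ℤ) (hjbot : ∀ i, i < j → ℳ i = ⊥) (hjne : ℳ j ≠ ⊥)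
    {d : ℤ} (hdj : j ≤ d) :
    mge 𝒜 ℳ hpos (d + 1) ≤
      Submodule.span A {y : M | ∃ a ∈ age 𝒜 hpos 1, ∃ x ∈ mge 𝒜 ℳ hpos d, y = a • x} := by
  set JN := Submodule.span A {y : M | ∃ a ∈ age 𝒜 hpos 1, ∃ x ∈ mge 𝒜 ℳ hpos d, y = a • x}
    with hJN
  intro x hx
  obtain ⟨s, hs, hsum⟩ := exists_finset_cmp ℳ x
  rw [← hsum]
  refine Submodule.sum_mem _ fun t _ => ?_
  rcases lt_or_ge t (d + 1) with hlt | hge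
  · rw [hx t hlt]; exact Submodule.zero_mem _
  · -- cmp t x ∈ ℳ t with t ≥ d + 1
    have hzt : cmp ℳ t x ∈ Submodule.span A (ℳ j : Set M) :=
      (top_gen 𝒜 ℳ hpos hss hhd j hjbot hjne) ▸ Submodule.mem_top
    have h1 := cmp_span_piece 𝒜 ℳ hpos j _ hzt t
    rw [cmp_of_mem_same ℳ (cmp_mem ℳ t x)] at h1
    -- now push U t into JN
    have hUle : Submodule.span A
        {y : M | ∃ c ∈ age 𝒜 hpos (t - j), ∃ z ∈ (ℳ j : Set M), y = c • z} ≤ JN := by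
      rw [Submodule.span_le]
      rintro y ⟨c, hc, z, hz, rfl⟩
      obtain ⟨sc, hsc, hsumc⟩ := exists_finset_cmp 𝒜 c
      rw [← hsumc, Finset.sum_smul]
      refine Submodule.sum_mem _ fun p _ => ?_
      rcases lt_or_ge p (t - j) with hplt | hpge
      · rw [hc p hplt, zero_smul]; exact Submodule.zero_mem _
      · have hp1 : (1 : ℤ) ≤ p := by omega
        have hfac : 𝒜 p = 𝒜 1 * 𝒜 (p - 1) := by
          have := hgen (p - 1) (by omega)
          rwa [show p - 1 + 1 = p by ring] at this
        have hcp : cmp 𝒜 p c ∈ 𝒜 1 * 𝒜 (p - 1) := hfac ▸ cmp_mem 𝒜 p c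
        refine Submodule.mul_induction_on hcp ?_ ?_
        · intro a1 ha1 e he
          rw [mul_smul]
          refine Submodule.subset_span ⟨a1, piece_le_age 𝒜 hpos ha1 le_rfl, e • z, ?_, rfl⟩
          exact mem_mge_of_piece 𝒜 ℳ hpos (smul_piece_mem 𝒜 ℳ he hz) (by omega)
        · intro y1 y2 h1 h2
          rw [add_smul]
          exact Submodule.add_mem _ h1 h2
    exact hUle h1

lemma radSeries_eq (hss : IsSemisimpleRing ↥(𝒜 0))
    (hgen : ∀ i : ℤ, 0 ≤ i → 𝒜 (i + 1) = 𝒜 1 * 𝒜 i)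
    (hhd : IsSimpleModule A (M ⧸ radM A M)) [IsNoetherian A M]
    (j : ℤ) (hjbot : ∀ i, i < j → ℳ i = ⊥) (hjne : ℳ j ≠ ⊥) :
    ∀ n : ℕ, radSeries A M n = mge 𝒜 ℳ hpos (j + n) := by
  intro n
  induction n with
  | zero =>
    show (⊤ : Submodule A M) = _
    rw [show j + ((0 : ℕ) : ℤ) = j by simp, mge_eq_top 𝒜 ℳ hpos hjbot]
  | succ n ih =>
    show radOf (radSeries A M n) = _
    rw [ih]
    set N := mge 𝒜 ℳ hpos (j + n) with hN
    have hmap : radOf N = Submodule.span A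
        {y : M | ∃ a ∈ age 𝒜 hpos 1, ∃ x ∈ N, y = a • x} := by
      rw [radOf, radM_eq 𝒜 hpos hss ↥N, Submodule.map_span]
      congr 1
      ext y
      constructor
      · rintro ⟨w, ⟨a, ha, xx, rfl⟩, rfl⟩
        exact ⟨a, ha, ↑xx, xx.2, rfl⟩
      · rintro ⟨a, ha, xx, hxx, rfl⟩
        exact ⟨a • (⟨xx, hxx⟩ : ↥N), ⟨a, ha, ⟨xx, hxx⟩, rfl⟩, rfl⟩
    rw [hmap]
    apply le_antisymm
    · rw [Submodule.span_le]
      rintro y ⟨a, ha, x, hx, rfl⟩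
      have := smul_mge 𝒜 ℳ hpos ha hx
      rw [show (1 : ℤ) + (j + n) = j + ((n + 1 : ℕ) : ℤ) by push_cast; ring] at this
      exact this
    · have := mge_succ_le_JN 𝒜 ℳ hpos hss hgen hhd j hjbot hjne (d := j + n) (by omega)
      rwa [show (j + (n : ℤ)) + 1 = j + ((n + 1 : ℕ) : ℤ) by push_cast; ring] at this

end Series2

section Series3

variable [FiniteDimensional k A]

lemma socM_eq_socSeries_one (hss : IsSemisimpleRing ↥(𝒜 0)) :
    socM A M = socSeries A M 1 := by
  rw [socM_eq 𝒜 hpos hss M]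
  ext x
  rw [mem_annAge]
  show _ ↔ x ∈ socStep (socSeries A M 0)
  rw [mem_socStep_iff 𝒜 hpos hss]
  show _ ↔ ∀ a ∈ age 𝒜 hpos 1, a • x ∈ (⊥ : Submodule A M)
  simp [Submodule.mem_bot]

lemma eq_cmp_of_concentrated {d : ℤ} {x : M} (h : ∀ n, n ≠ d → cmp ℳ n x = 0) :
    cmp ℳ d x = x := by
  obtain ⟨s, hs, hsum⟩ := exists_finset_cmp ℳ x
  by_cases hd : d ∈ s
  · conv_rhs => rw [← hsum]
    rw [Finset.sum_eq_single_of_mem d hd]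
    intro n _ hn
    exact h n hn
  · have hdz : cmp ℳ d x = 0 := by
      by_contra h0; exact hd (hs d h0)
    rw [hdz, ← hsum]
    symm
    exact Finset.sum_eq_zero fun n hn => by
      by_cases hnd : n = d
      · rw [hnd]; exact hdz
      · exact h n hnd
  
lemma soc_concentrated (hss : IsSemisimpleRing ↥(𝒜 0))
    (hsoc : IsSimpleModule A ↥(socM A M))
    (kk : ℤ) (hkbot : ∀ i, kk < i → ℳ i = ⊥) (hkne : ℳ kk ≠ ⊥) :
    ∀ x ∈ socM A M, ∀ t, t ≠ kk → cmp ℳ t x = 0 := by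
  have hWann : socM A M = annAge 𝒜 hpos M := socM_eq 𝒜 hpos hss M
  have hgraded : ∀ x ∈ socM A M, ∀ t, cmp ℳ t x ∈ socM A M := by
    rw [socM_eq_socSeries_one 𝒜 hpos hss]
    exact fun x hx t => socSeries_graded 𝒜 ℳ hpos hss 1 x hx t
  have hmkk : ∀ z ∈ ℳ kk, z ∈ socM A M := by
    rw [hWann]
    intro z hz a ha
    have h1 : a • z ∈ mge 𝒜 ℳ hpos (1 + kk) :=
      smul_mge 𝒜 ℳ hpos ha (mem_mge_of_piece 𝒜 ℳ hpos hz le_rfl)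
    have h2 : mge 𝒜 ℳ hpos (1 + kk) = ⊥ :=
      mge_eq_bot 𝒜 ℳ hpos fun i hi => hkbot i (by omega)
    rw [h2] at h1
    simpa using h1
  obtain ⟨z, hz, hz0⟩ := (Submodule.ne_bot_iff (ℳ kk)).mp hkne
  have hatom : IsAtom (socM A M) := isSimpleModule_iff_isAtom.mp hsoc
  intro x hx t htkk
  by_contra hcmp
  -- t < kk since ℳ t ≠ ⊥
  have htlt : t < kk := by
    rcases lt_or_ge t kk with h | h
    · exact h
    · exfalso
      have : ℳ t = ⊥ := hkbot t (by omega)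
      have hmem := cmp_mem ℳ t x
      rw [this] at hmem
      exact hcmp (by simpa using hmem)
  set V := socM A M ⊓ mge 𝒜 ℳ hpos (t + 1) with hV
  have hzV : z ∈ V := ⟨hmkk z hz, mem_mge_of_piece 𝒜 ℳ hpos hz (by omega)⟩
  have hVne : V ≠ ⊥ := fun h => hz0 (by rw [h] at hzV; simpa using hzV)
  have hVeq : V = socM A M := by
    rcases eq_or_lt_of_le (inf_le_left : V ≤ socM A M) with h | h
    · exact h
    · exact absurd (hatom.2 V h) hVne
  have hcmpV : cmp ℳ t x ∈ V := hVeq.symm ▸ hgraded x hx t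
  have := hcmpV.2 t (by omega)
  rw [cmp_of_mem_same ℳ (cmp_mem ℳ t x)] at this
  exact hcmp this

lemma socSeries_ge (kk : ℤ) (hss : IsSemisimpleRing ↥(𝒜 0))
    (hkbot : ∀ i, kk < i → ℳ i = ⊥) :
    ∀ n : ℕ, mge 𝒜 ℳ hpos (kk + 1 - n) ≤ socSeries A M n := by
  intro n
  induction n with
  | zero =>
    rw [show kk + 1 - ((0 : ℕ) : ℤ) = kk + 1 by simp,
      mge_eq_bot 𝒜 ℳ hpos fun i hi => hkbot i (by omega)]
    exact bot_le
  | succ n ih =>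
    intro x hx
    show x ∈ socStep (socSeries A M n)
    rw [mem_socStep_iff 𝒜 hpos hss]
    intro a ha
    refine ih ?_
    have := smul_mge 𝒜 ℳ hpos ha hx
    rwa [show (1 : ℤ) + (kk + 1 - ((n + 1 : ℕ) : ℤ)) = kk + 1 - (n : ℤ) by push_cast; ring] at this

lemma socSeries_le (hss : IsSemisimpleRing ↥(𝒜 0))
    (hgen : ∀ i : ℤ, 0 ≤ i → 𝒜 (i + 1) = 𝒜 1 * 𝒜 i)
    (hsoc : IsSimpleModule A ↥(socM A M)) [IsArtinian A M]
    (kk : ℤ) (hkbot : ∀ i, kk < i → ℳ i = ⊥) (hkne : ℳ kk ≠ ⊥) :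
    ∀ n : ℕ, socSeries A M n ≤ mge 𝒜 ℳ hpos (kk + 1 - n) := by
  intro n
  rcases Nat.eq_zero_or_pos n with rfl | hn1
  · show (⊥ : Submodule A M) ≤ _
    exact bot_le
  intro x hx t htlt
  by_contra hcmp
  -- t ≤ kk - n
  have htle : t ≤ kk - n := by omega
  set xt := cmp ℳ t x with hxt
  have hxtsoc : xt ∈ socSeries A M n := socSeries_graded 𝒜 ℳ hpos hss n x hx t
  have hxtmem : xt ∈ ℳ t := cmp_mem ℳ t x
  set X := Submodule.span A {xt} with hX
  have hXne : X ≠ ⊥ := fun h => hcmp (Submodule.span_singleton_eq_bot.mp h)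
  haveI : IsAtomic (Submodule A M) := isAtomic_of_orderBot_wellFounded_lt wellFounded_lt
  rcases IsAtomic.eq_bot_or_exists_atom_le X with h | ⟨P, hP, hPle⟩
  · exact hXne h
  have hPsoc : P ≤ socM A M := le_sSup (isSimpleModule_iff_isAtom.mpr hP)
  obtain ⟨sP, hsP, hsP0⟩ := (Submodule.ne_bot_iff P).mp hP.1
  obtain ⟨b, hb⟩ := Submodule.mem_span_singleton.mp (hPle hsP)
  -- sP is concentrated in degree kk
  have hconc : cmp ℳ kk sP = sP :=
    eq_cmp_of_concentrated 𝒜 ℳ hpos fun n' hn' =>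
      soc_concentrated 𝒜 ℳ hpos hss hsoc kk hkbot hkne sP (hPsoc hsP) n' hn'
  -- compute cmp kk (b • xt)
  have hcomp : sP = (cmp 𝒜 (kk - t) b) • xt := by
    rw [← hconc, ← hb]
    obtain ⟨s, hcov, heq⟩ := cmp_smul 𝒜 ℳ b xt kk
    rw [heq]
    by_cases hmem : (kk - t) ∈ s
    · rw [Finset.sum_eq_single_of_mem _ hmem]
      · congr 1
        rw [show kk - (kk - t) = t by ring]
        exact cmp_of_mem_same ℳ hxtmem
      · intro p _ hne
        rw [cmp_of_mem_ne ℳ hxtmem (by omega), smul_zero]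
    · have h0 : cmp 𝒜 (kk - t) b = 0 := by
        by_contra h; exact hmem (hcov _ h)
      rw [h0, zero_smul]
      exact Finset.sum_eq_zero fun p hp => by
        rcases eq_or_ne p (kk - t) with rfl | hne
        · exact absurd hp hmem
        · rw [cmp_of_mem_ne ℳ hxtmem (by omega), smul_zero]
  -- every element of 𝒜 n kills xt
  have hc0 : ∀ c ∈ 𝒜 ((n : ℕ) : ℤ), c • xt = 0 := by
    intro c hc
    have hcast : ((n - 1 + 1 : ℕ) : ℤ) = ((n : ℕ) : ℤ) := by omega
    have h1 := ckill 𝒜 hpos hss hgen (n - 1) n (by omega) c (by rw [hcast]; exact hc) xt hxtsoc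
    rw [show n - (n - 1 + 1) = 0 by omega] at h1
    simpa [socSeries] using h1
  have hbkill : (cmp 𝒜 (kk - t) b) • xt = 0 := by
    rcases eq_or_lt_of_le (show (n : ℤ) ≤ kk - t by omega) with hEq | hLt
    · exact hc0 _ (by rw [hEq]; exact cmp_mem 𝒜 (kk - t) b)
    · have hfac : 𝒜 (kk - t) = 𝒜 (kk - t - n) * 𝒜 ((n : ℕ) : ℤ) := by
        have := right_gen 𝒜 hpos hgen (kk - t - n) (by omega) ((n : ℕ) : ℤ) (by exact_mod_cast hn1)
        rwa [show kk - t - (n : ℤ) + (n : ℤ) = kk - t by ring] at this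
      have hmem2 : cmp 𝒜 (kk - t) b ∈ 𝒜 (kk - t - n) * 𝒜 ((n : ℕ) : ℤ) :=
        hfac ▸ cmp_mem 𝒜 (kk - t) b
      have hres : (cmp 𝒜 (kk - t) b) • xt ∈ (⊥ : Submodule A M) := by
        refine Submodule.mul_induction_on hmem2 ?_ ?_
        · intro e _ c hc
          rw [mul_smul, hc0 c hc, smul_zero]
          exact Submodule.zero_mem _
        · intro y1 y2 h1 h2
          rw [add_smul]
          exact Submodule.add_mem _ h1 h2
      simpa using hres
  rw [hbkill] at hcomp
  exact hsP0 hcomp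

end Series3

end S12

/-- let `A` be a finite-dimensional positively graded algebra over a field
with `A_0` semisimple and `A` generated by `A_1` over `A_0`.  If a finite-dimensional
graded `A`-module `M` has simple head and simple socle, then `M` is rigid:
`soc^i M = rad^{ℓℓ(M)−i} M` for all `0 ≤ i ≤ ℓℓ(M)`. -/
theorem statement12 {k A M : Type*} [Field k] [Ring A] [Algebra k A]
    (𝒜 : ℤ → Submodule k A) [GradedAlgebra 𝒜]
    [AddCommGroup M] [Module k M] [Module A M] [IsScalarTower k A M]
    (ℳ : ℤ → Submodule k M) [SetLike.GradedSMul 𝒜 ℳ] [DirectSum.Decomposition ℳ]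
    [FiniteDimensional k A] [FiniteDimensional k M]
    (hpos : ∀ i : ℤ, i < 0 → 𝒜 i = ⊥)
    (hss : IsSemisimpleRing ↥(𝒜 0))
    (hgen : ∀ i : ℤ, 0 ≤ i → 𝒜 (i + 1) = 𝒜 1 * 𝒜 i)
    (hhd : IsSimpleModule A (M ⧸ radM A M))
    (hsoc : IsSimpleModule A ↥(socM A M)) :
    ∀ i ≤ loewyLength A M,
      socSeries A M i = radSeries A M (loewyLength A M - i) := by
  classical
  haveI : IsNoetherian A M := isNoetherian_of_tower k inferInstance
  haveI : IsArtinian A M := isArtinian_of_tower k inferInstance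
  obtain ⟨z, hzmem, hz0⟩ := (Submodule.ne_bot_iff (socM A M)).mp
    (isSimpleModule_iff_isAtom.mp hsoc).1
  obtain ⟨n0, hn0⟩ : ∃ n : ℤ, S12.cmp ℳ n z ≠ 0 := by
    by_contra h
    push_neg at h
    exact hz0 (S12.eq_zero_of_cmp ℳ z h)
  have hfin := S12.finite_support ℳ
  have hn0mem : n0 ∈ hfin.toFinset := by
    rw [Set.Finite.mem_toFinset]
    intro h
    apply hn0
    have := S12.cmp_mem ℳ n0 z
    rw [h] at this
    simpa using this
  have hne : hfin.toFinset.Nonempty := ⟨n0, hn0mem⟩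
  set j := hfin.toFinset.min' hne with hj
  set kk := hfin.toFinset.max' hne with hkk
  have hjne : ℳ j ≠ ⊥ := Set.Finite.mem_toFinset hfin |>.mp (hfin.toFinset.min'_mem hne)
  have hkne : ℳ kk ≠ ⊥ := Set.Finite.mem_toFinset hfin |>.mp (hfin.toFinset.max'_mem hne)
  have hjbot : ∀ i, i < j → ℳ i = ⊥ := by
    intro i hi
    by_contra h
    have : i ∈ hfin.toFinset := (Set.Finite.mem_toFinset hfin).mpr h
    have := hfin.toFinset.min'_le i this
    omega
  have hkbot : ∀ i, kk < i → ℳ i = ⊥ := by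
    intro i hi
    by_contra h
    have : i ∈ hfin.toFinset := (Set.Finite.mem_toFinset hfin).mpr h
    have := hfin.toFinset.le_max' i this
    omega
  have hjk : j ≤ kk := hfin.toFinset.min'_le kk (hfin.toFinset.max'_mem hne)
  set L : ℕ := (kk + 1 - j).toNat with hLdef
  have hL : (L : ℤ) = kk + 1 - j := Int.toNat_of_nonneg (by omega)
  have hsocn : ∀ n : ℕ, socSeries A M n = S12.mge 𝒜 ℳ hpos (kk + 1 - n) := fun n =>
    le_antisymm (S12.socSeries_le 𝒜 ℳ hpos hss hgen hsoc kk hkbot hkne n)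
      (S12.socSeries_ge 𝒜 ℳ hpos kk hss hkbot n)
  have hradn : ∀ n : ℕ, radSeries A M n = S12.mge 𝒜 ℳ hpos (j + n) :=
    S12.radSeries_eq 𝒜 ℳ hpos hss hgen hhd j hjbot hjne
  have hmge_top : ∀ d : ℤ, S12.mge 𝒜 ℳ hpos d = ⊤ ↔ d ≤ j := by
    intro d
    constructor
    · intro h
      by_contra hd
      obtain ⟨z', hz', hz'0⟩ := (Submodule.ne_bot_iff (ℳ j)).mp hjne
      have hz'mem : z' ∈ S12.mge 𝒜 ℳ hpos d := h ▸ Submodule.mem_top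
      have := hz'mem j (by omega)
      rw [S12.cmp_of_mem_same ℳ hz'] at this
      exact hz'0 this
    · intro h
      exact S12.mge_eq_top 𝒜 ℳ hpos fun i hi => hjbot i (by omega)
  have hmemS : ∀ n : ℕ, socSeries A M n = ⊤ ↔ L ≤ n := by
    intro n
    rw [hsocn n, hmge_top]
    omega
  have hLoewy : loewyLength A M = L := by
    rw [loewyLength]
    apply le_antisymm
    · exact Nat.sInf_le ((hmemS L).mpr le_rfl)
    · have hmem := Nat.sInf_mem (⟨L, (hmemS L).mpr le_rfl⟩ :
        {n : ℕ | socSeries A M n = ⊤}.Nonempty)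
      exact (hmemS _).mp hmem
  intro i hi
  rw [hLoewy] at hi ⊢
  rw [hsocn i, hradn (L - i)]
  congr 1
  omega
end

section
/- Let A = ⊕_{i≥0} A_i be a finite-dimensional positively graded algebra over a field with A_0 semisimple and A generated in degree 1, and M a finite-dimensional graded A-module with simple socle concentrated in degree k. Then soc^i M = M_{≥ k−i+1} for every i ≥ 0, where soc^i is the socle series of M as an A-module. -/
set_option linter.unusedSectionVars false
open scoped Classical DirectSum

section Aux
variable {k A M : Type*} [Field k] [Ring A] [Algebra k A]
    (𝒜 : ℤ → Submodule k A) [GradedAlgebra 𝒜]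
    [AddCommGroup M] [Module k M] [Module A M] [IsScalarTower k A M]

/-- expand a scalar action through the decomposition of the scalar -/
lemma aux_smul_sum {Q : Type*} [AddCommGroup Q] [Module A Q] (a : A) (z : Q) :
    a • z = ∑ t ∈ (DirectSum.decompose 𝒜 a).support,
      ((DirectSum.decompose 𝒜 a t : A) • z) := by
  conv_lhs => rw [← DirectSum.sum_support_decompose 𝒜 a]
  rw [Finset.sum_smul]

lemma aux_neg_comp (hpos : ∀ i : ℤ, i < 0 → 𝒜 i = ⊥) (a : A) {t : ℤ} (ht : t < 0) :
    (DirectSum.decompose 𝒜 a t : A) = 0 := by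
  have h := (DirectSum.decompose 𝒜 a t).2
  exact (Submodule.mem_bot k).mp (hpos t ht ▸ h)

lemma aux_finA [FiniteDimensional k A] : ∃ D : ℤ, 0 ≤ D ∧ ∀ j : ℤ, D < j → 𝒜 j = ⊥ := by
  have hind : iSupIndep 𝒜 :=
    (DirectSum.Decomposition.isInternal 𝒜).submodule_iSupIndep
  have hfin : {i : ℤ | 𝒜 i ≠ ⊥}.Finite := Submodule.finite_ne_bot_of_iSupIndep hind
  obtain ⟨D, hD⟩ := hfin.bddAbove
  refine ⟨max D 0, le_max_right _ _, fun j hj => ?_⟩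
  by_contra h
  exact absurd (hD h) (by omega)

/-- The annihilator of `𝒜_{≥ n}` in `M`, as an `A`-submodule. -/
def annA (hpos : ∀ i : ℤ, i < 0 → 𝒜 i = ⊥) (n : ℕ) : Submodule A M where
  carrier := {x | ∀ j : ℤ, (n : ℤ) ≤ j → ∀ a ∈ 𝒜 j, a • x = 0}
  zero_mem' := fun j _ a _ => smul_zero a
  add_mem' := by
    intro x y hx hy j hj a ha
    rw [smul_add, hx j hj a ha, hy j hj a ha, add_zero]
  smul_mem' := by
    intro b x hx j hj a ha
    rw [← mul_smul]
    have hba : a * b = ∑ t ∈ (DirectSum.decompose 𝒜 b).support,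
        a * (DirectSum.decompose 𝒜 b t : A) := by
      conv_lhs => rw [← DirectSum.sum_support_decompose 𝒜 b]
      rw [Finset.mul_sum]
    rw [hba, Finset.sum_smul]
    refine Finset.sum_eq_zero fun t _ => ?_
    rcases lt_or_ge t 0 with ht | ht
    · rw [aux_neg_comp 𝒜 hpos b ht, mul_zero, zero_smul]
    · have hmem : a * (DirectSum.decompose 𝒜 b t : A) ∈ 𝒜 (j + t) :=
        SetLike.mul_mem_graded ha (DirectSum.decompose 𝒜 b t).2
      exact hx (j + t) (by omega) _ hmem

lemma mem_annA (hpos : ∀ i : ℤ, i < 0 → 𝒜 i = ⊥) (n : ℕ) (x : M) :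
    x ∈ annA 𝒜 hpos n ↔ ∀ j : ℤ, (n : ℤ) ≤ j → ∀ a ∈ 𝒜 j, a • x = 0 := Iff.rfl

lemma aux_gen (hgen : ∀ i : ℤ, 0 ≤ i → 𝒜 (i + 1) = 𝒜 1 * 𝒜 i) :
    ∀ s : ℤ, 0 ≤ s → ∀ r : ℤ, 0 ≤ r → 𝒜 (s + r) ≤ 𝒜 s * 𝒜 r := by
  refine fun s => Int.le_induction (m := 0)
    (motive := fun s _ => ∀ r : ℤ, 0 ≤ r → 𝒜 (s + r) ≤ 𝒜 s * 𝒜 r) ?_ ?_ s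
  · intro r _ x hx
    rw [zero_add] at hx
    have h1 : x = 1 * x := (one_mul x).symm
    rw [h1]
    exact Submodule.mul_mem_mul (SetLike.one_mem_graded 𝒜) hx
  · intro s hs ih r hr x hx
    have e : s + 1 + r = (s + r) + 1 := by ring
    rw [e, hgen (s + r) (by omega)] at hx
    have h2 : 𝒜 1 * 𝒜 (s + r) ≤ 𝒜 (s + 1) * 𝒜 r := by
      rw [hgen s hs, mul_assoc]
      exact Submodule.mul_le.mpr fun m hm p hp =>
        Submodule.mul_mem_mul hm (ih r hr hp)
    exact h2 hx

/-- homogeneous elements of positive degree annihilate every simple `A`-module -/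
lemma aux_kill_simple (hpos : ∀ i : ℤ, i < 0 → 𝒜 i = ⊥)
    {DA : ℤ} (hA : ∀ j : ℤ, DA < j → 𝒜 j = ⊥)
    {Q : Type*} [AddCommGroup Q] [Module A Q] [IsSimpleModule A Q]
    {j : ℤ} (hj : 1 ≤ j) {b : A} (hb : b ∈ 𝒜 j) (y : Q) : b • y = 0 := by
  set W : ℕ → Submodule A Q := fun r => Submodule.span A
    {q | ∃ j' : ℤ, (r : ℤ) ≤ j' ∧ ∃ b' ∈ 𝒜 j', ∃ y' : Q, q = b' • y'} with hW
  have key : ∀ r : ℕ, ∀ z ∈ W r, ∀ j' : ℤ, 1 ≤ j' → ∀ b' ∈ 𝒜 j', b' • z ∈ W (r + 1) := by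
    intro r z hz
    refine Submodule.span_induction
      (p := fun z _ => ∀ j' : ℤ, 1 ≤ j' → ∀ b' ∈ 𝒜 j', b' • z ∈ W (r + 1))
      ?_ ?_ ?_ ?_ hz
    · rintro q ⟨j2, hj2, b2, hb2, y2, rfl⟩ j' hj' b' hb'
      refine Submodule.subset_span ⟨j' + j2, by push_cast; omega, b' * b2,
        SetLike.mul_mem_graded hb' hb2, y2, ?_⟩
      rw [mul_smul]
    · intro j' _ b' _
      rw [smul_zero]; exact (W (r + 1)).zero_mem
    · intro z1 z2 _ _ h1 h2 j' hj' b' hb'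
      rw [smul_add]
      exact (W (r + 1)).add_mem (h1 j' hj' b' hb') (h2 j' hj' b' hb')
    · intro a z _ ih j' hj' b' hb'
      rw [← mul_smul]
      have hba : b' * a = ∑ t ∈ (DirectSum.decompose 𝒜 a).support,
          b' * (DirectSum.decompose 𝒜 a t : A) := by
        conv_lhs => rw [← DirectSum.sum_support_decompose 𝒜 a]
        rw [Finset.mul_sum]
      rw [hba, Finset.sum_smul]
      refine (W (r + 1)).sum_mem fun t _ => ?_
      rcases lt_or_ge t 0 with ht | ht
      · rw [aux_neg_comp 𝒜 hpos a ht, mul_zero, zero_smul]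
        exact (W (r + 1)).zero_mem
      · exact ih (j' + t) (by omega) _
          (SetLike.mul_mem_graded hb' (DirectSum.decompose 𝒜 a t).2)
  rcases eq_bot_or_eq_top (W 1) with hbot | htop
  · have : b • y ∈ W 1 := Submodule.subset_span ⟨j, by exact_mod_cast hj, b, hb, y, rfl⟩
    rw [hbot] at this
    exact (Submodule.mem_bot A).mp this
  · exfalso
    have htop' : ∀ r : ℕ, 1 ≤ r → W r = ⊤ := by
      intro r hr
      induction r, hr using Nat.le_induction with
      | base => exact htop
      | succ r hr ih =>
        refine top_unique ?_
        have h1 : W 1 ≤ W (r + 1) := by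
          refine Submodule.span_le.mpr ?_
          rintro q ⟨j2, hj2, b2, hb2, y2, rfl⟩
          have hy2 : y2 ∈ W r := by rw [ih]; trivial
          exact key r y2 hy2 j2 (by exact_mod_cast hj2) b2 hb2
        calc (⊤ : Submodule A Q) = W 1 := htop.symm
        _ ≤ W (r + 1) := h1
    set r : ℕ := (max DA 0 + 1).toNat with hr
    have hrZ : (r : ℤ) = max DA 0 + 1 := Int.toNat_of_nonneg (by omega)
    have hr1 : 1 ≤ r := by omega
    have hbotr : W r = ⊥ := by
      refine le_bot_iff.mp (Submodule.span_le.mpr ?_)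
      rintro q ⟨j2, hj2, b2, hb2, y2, rfl⟩
      have : 𝒜 j2 = ⊥ := hA j2 (by omega)
      rw [this] at hb2
      rw [(Submodule.mem_bot k).mp hb2, zero_smul]
      exact (⊥ : Submodule A Q).zero_mem
    have := htop' r hr1
    rw [hbotr] at this
    exact bot_ne_top this

lemma aux_kill_socle (hpos : ∀ i : ℤ, i < 0 → 𝒜 i = ⊥)
    {DA : ℤ} (hA : ∀ j : ℤ, DA < j → 𝒜 j = ⊥)
    {Q : Type*} [AddCommGroup Q] [Module A Q]
    {y : Q} (hy : y ∈ socM A Q) {j : ℤ} (hj : 1 ≤ j) {b : A} (hb : b ∈ 𝒜 j) :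
    b • y = 0 := by
  unfold socM at hy
  rw [sSup_eq_iSup'] at hy
  refine Submodule.iSup_induction (motive := fun y => b • y = 0) _ hy ?_ (smul_zero b) ?_
  · rintro ⟨S, hS⟩ x hx
    haveI : IsSimpleModule A ↥S := hS
    have h0 : b • (⟨x, hx⟩ : ↥S) = 0 := aux_kill_simple 𝒜 hpos hA hj hb _
    have := congrArg (Subtype.val) h0
    simpa using this
  · intro x y h1 h2
    rw [smul_add, h1, h2, add_zero]

lemma aux_le_soc {Q : Type*} [AddCommGroup Q] [Module A Q] (P : Submodule A Q)
    (h : IsSemisimpleModule A ↥P) : P ≤ socM A Q := by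
  haveI := h
  have h1 : sSup {W : Submodule A ↥P | IsSimpleModule A ↥W} = ⊤ :=
    IsSemisimpleModule.sSup_simples_eq_top A ↥P
  have h2 : P = Submodule.map P.subtype ⊤ := (Submodule.map_subtype_top P).symm
  rw [h2, ← h1, sSup_eq_iSup', Submodule.map_iSup]
  refine iSup_le fun W => le_sSup ?_
  haveI : IsSimpleModule A ↥(W : Submodule A ↥P) := W.2
  exact IsSimpleModule.congr
    (Submodule.equivMapOfInjective P.subtype P.injective_subtype (W : Submodule A ↥P)).symm

lemma aux_ss (hpos : ∀ i : ℤ, i < 0 → 𝒜 i = ⊥) (hss : IsSemisimpleRing ↥(𝒜 0))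
    {Q : Type*} [AddCommGroup Q] [Module A Q] (P : Submodule A Q)
    (hkill : ∀ j : ℤ, 1 ≤ j → ∀ b ∈ 𝒜 j, ∀ y ∈ P, b • y = 0) :
    IsSemisimpleModule A ↥P := by
  haveI := hss
  let ι : ↥(𝒜 0) →+* A :=
    { toFun := fun r => (r : A)
      map_one' := rfl
      map_mul' := fun _ _ => rfl
      map_zero' := rfl
      map_add' := fun _ _ => rfl }
  letI : Module ↥(𝒜 0) ↥P := Module.compHom _ ι
  haveI hS : IsSemisimpleModule ↥(𝒜 0) ↥P := inferInstance
  refine @IsSemisimpleModule.mk _ _ _ _ _ ⟨?_⟩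
  intro W
  let W0 : Submodule ↥(𝒜 0) ↥P :=
    { carrier := W
      zero_mem' := W.zero_mem
      add_mem' := fun h1 h2 => W.add_mem h1 h2
      smul_mem' := fun r y hy => W.smul_mem (ι r) hy }
  obtain ⟨V0, hV0⟩ := exists_isCompl W0
  have hVsmul : ∀ (a : A) (y : ↥P), y ∈ V0 → a • y ∈ V0 := by
    intro a y hy
    rw [aux_smul_sum 𝒜 a y]
    refine V0.sum_mem fun t _ => ?_
    rcases lt_trichotomy t 0 with ht | ht | ht
    · rw [aux_neg_comp 𝒜 hpos a ht, zero_smul]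
      exact V0.zero_mem
    · subst ht
      exact V0.smul_mem (⟨_, (DirectSum.decompose 𝒜 a 0).2⟩ : ↥(𝒜 0)) hy
    · have h0 : ((DirectSum.decompose 𝒜 a t : A) • y : ↥P) = 0 := by
        apply Subtype.ext
        have : ((DirectSum.decompose 𝒜 a t : A) • y : ↥P).val
            = (DirectSum.decompose 𝒜 a t : A) • (y : Q) := rfl
        rw [this]
        exact hkill t (by omega) _ (DirectSum.decompose 𝒜 a t).2 _ y.2
      rw [h0]
      exact V0.zero_mem
  let V : Submodule A ↥P :=
    { carrier := V0
      zero_mem' := V0.zero_mem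
      add_mem' := fun h1 h2 => V0.add_mem h1 h2
      smul_mem' := fun a y hy => hVsmul a y hy }
  refine ⟨V, ?_, ?_⟩
  · rw [disjoint_iff, eq_bot_iff]
    intro y hy
    have h1 : y ∈ W0 ⊓ V0 := ⟨(Submodule.mem_inf.mp hy).1, (Submodule.mem_inf.mp hy).2⟩
    rw [disjoint_iff.mp hV0.disjoint] at h1
    simpa using h1
  · rw [codisjoint_iff, eq_top_iff]
    intro y _
    have h1 : y ∈ W0 ⊔ V0 := by rw [codisjoint_iff.mp hV0.codisjoint]; trivial
    obtain ⟨w, hw, v, hv, rfl⟩ := Submodule.mem_sup.mp h1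
    exact Submodule.mem_sup.mpr ⟨w, hw, v, hv, rfl⟩

variable (ℳ : ℤ → Submodule k M) [SetLike.GradedSMul 𝒜 ℳ] [DirectSum.Decomposition ℳ]

lemma aux_smul_mem {j m : ℤ} {a : A} {x : M} (ha : a ∈ 𝒜 j) (hx : x ∈ ℳ m) :
    a • x ∈ ℳ (j + m) := by
  have h := SetLike.GradedSMul.smul_mem (A := 𝒜) (B := ℳ) ha hx
  simpa [vadd_eq_add] using h

lemma aux_top [FiniteDimensional k M] (hpos : ∀ i : ℤ, i < 0 → 𝒜 i = ⊥) (c : ℤ)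
    (hsocdeg : Submodule.restrictScalars k (socM A M) ≤ ℳ c) :
    ∀ t : ℤ, c < t → ℳ t = ⊥ := by
  have hind : iSupIndep ℳ := (DirectSum.Decomposition.isInternal ℳ).submodule_iSupIndep
  have hfin : {t : ℤ | ℳ t ≠ ⊥}.Finite := Submodule.finite_ne_bot_of_iSupIndep hind
  intro t0 ht0
  by_contra hne
  have ht0m : t0 ∈ hfin.toFinset := hfin.mem_toFinset.mpr hne
  have hFne : hfin.toFinset.Nonempty := ⟨t0, ht0m⟩
  set d := hfin.toFinset.max' hFne with hd
  have hmax : ∀ x ∈ hfin.toFinset, x ≤ d := fun x hx => hfin.toFinset.le_max' x hx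
  have hdc : c < d := lt_of_lt_of_le ht0 (hmax t0 ht0m)
  have hbig : ∀ s : ℤ, d < s → ℳ s = ⊥ := by
    intro s hs
    by_contra h
    exact absurd (hmax s (hfin.mem_toFinset.mpr h)) (by omega)
  let ND : Submodule A M :=
    { carrier := ℳ d
      zero_mem' := (ℳ d).zero_mem
      add_mem' := fun h1 h2 => (ℳ d).add_mem h1 h2
      smul_mem' := by
        intro a x hx
        show a • x ∈ ℳ d
        rw [aux_smul_sum 𝒜 a x]
        refine (ℳ d).sum_mem fun t _ => ?_
        rcases lt_trichotomy t 0 with ht | ht | ht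
        · rw [aux_neg_comp 𝒜 hpos a ht, zero_smul]; exact (ℳ d).zero_mem
        · subst ht
          have h2 := aux_smul_mem 𝒜 ℳ (DirectSum.decompose 𝒜 a 0).2 hx
          rwa [zero_add] at h2
        · have h2 := aux_smul_mem 𝒜 ℳ (DirectSum.decompose 𝒜 a t).2 hx
          rw [hbig (t + d) (by omega)] at h2
          rw [(Submodule.mem_bot k).mp h2]
          exact (ℳ d).zero_mem }
  have hNDne : ND ≠ ⊥ := by
    obtain ⟨x, hxm, hxne⟩ := (Submodule.ne_bot_iff (ℳ d)).mp
      (hfin.mem_toFinset.mp (hfin.toFinset.max'_mem hFne))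
    exact (Submodule.ne_bot_iff ND).mpr ⟨x, hxm, hxne⟩
  haveI : IsArtinian A M := isArtinian_of_tower k inferInstance
  rcases eq_bot_or_exists_atom_le ND with h | ⟨S0, hatom, hle⟩
  · exact hNDne h
  · haveI hsimp : IsSimpleModule A ↥S0 := isSimpleModule_iff_isAtom.mpr hatom
    have hsoc : S0 ≤ socM A M := le_sSup hsimp
    obtain ⟨y, hyS, hyne⟩ := (Submodule.ne_bot_iff S0).mp hatom.1
    have hyc : y ∈ ℳ c := hsocdeg (by exact hsoc hyS)
    have hyd : y ∈ ℳ d := hle hyS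
    refine hyne ?_
    have hmem2 : y ∈ ⨆ s, ⨆ _ : s ≠ c, ℳ s :=
      Submodule.mem_iSup_of_mem d (Submodule.mem_iSup_of_mem (by omega) hyd)
    exact Submodule.disjoint_def.mp (hind c) y hyc hmem2

lemma aux_comp {a : A} {j : ℤ} (ha : a ∈ 𝒜 j) {x : M} (hx : a • x = 0) (m : ℤ) :
    a • (DirectSum.decompose ℳ x m : M) = 0 := by
  by_cases hm : m ∈ (DirectSum.decompose ℳ x).support
  case neg =>
    rw [DFinsupp.notMem_support_iff.mp hm]
    simp
  case pos =>
    have hx2 : a • x = ∑ t ∈ (DirectSum.decompose ℳ x).support,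
        a • (DirectSum.decompose ℳ x t : M) := by
      conv_lhs => rw [← DirectSum.sum_support_decompose ℳ x]
      rw [Finset.smul_sum]
    have h0 : (0 : ⨁ i, ↥(ℳ i)) = ∑ t ∈ (DirectSum.decompose ℳ x).support,
        (DirectSum.of (fun i => ↥(ℳ i)) (j + t)
          ⟨a • (DirectSum.decompose ℳ x t : M),
            aux_smul_mem 𝒜 ℳ ha (DirectSum.decompose ℳ x t).2⟩) := by
      calc (0 : ⨁ i, ↥(ℳ i)) = DirectSum.decompose ℳ (a • x) := by
            rw [hx, DirectSum.decompose_zero]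
      _ = ∑ t ∈ (DirectSum.decompose ℳ x).support,
            DirectSum.decompose ℳ (a • (DirectSum.decompose ℳ x t : M)) := by
            rw [hx2, DirectSum.decompose_sum]
      _ = _ := Finset.sum_congr rfl fun t _ => DirectSum.decompose_coe ℳ
            (⟨a • (DirectSum.decompose ℳ x t : M),
              aux_smul_mem 𝒜 ℳ ha (DirectSum.decompose ℳ x t).2⟩ : ℳ (j + t))
    have h1 : (0 : ↥(ℳ (j + m))) = ⟨a • (DirectSum.decompose ℳ x m : M),
        aux_smul_mem 𝒜 ℳ ha (DirectSum.decompose ℳ x m).2⟩ := by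
      have hφ := congrArg (DirectSum.component k ℤ (fun i => ↥(ℳ i)) (j + m)) h0
      rw [map_zero, map_sum] at hφ
      rw [Finset.sum_eq_single_of_mem m hm] at hφ
      · rwa [← DirectSum.lof_eq_of k, DirectSum.component.lof_self] at hφ
      · intro t _ htne
        rw [← DirectSum.lof_eq_of k, DirectSum.component.of]
        exact dif_neg (by omega)
    have h2 := congrArg Subtype.val h1
    simpa using h2.symm

lemma aux_ann_eq [FiniteDimensional k M] (hpos : ∀ i : ℤ, i < 0 → 𝒜 i = ⊥) (c : ℤ)
    (hsocdeg : Submodule.restrictScalars k (socM A M) ≤ ℳ c) (n : ℕ) :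
    Submodule.restrictScalars k (annA 𝒜 hpos n) =
      ⨆ m : ℤ, ⨆ _ : c - (n : ℤ) + 1 ≤ m, ℳ m := by
  have htop := aux_top 𝒜 ℳ hpos c hsocdeg
  apply le_antisymm
  · intro x hx
    rw [Submodule.restrictScalars_mem] at hx
    have hxsum : x = ∑ m ∈ (DirectSum.decompose ℳ x).support,
        (DirectSum.decompose ℳ x m : M) := (DirectSum.sum_support_decompose ℳ x).symm
    rw [hxsum]
    refine Submodule.sum_mem _ fun m _ => ?_
    rcases le_or_gt (c - (n : ℤ) + 1) m with hm | hm
    · exact Submodule.mem_iSup_of_mem m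
        (Submodule.mem_iSup_of_mem hm (DirectSum.decompose ℳ x m).2)
    · have hcomp : ∀ j : ℤ, (n : ℤ) ≤ j → ∀ a ∈ 𝒜 j,
          a • (DirectSum.decompose ℳ x m : M) = 0 :=
        fun j hj a ha => aux_comp 𝒜 ℳ ha (hx j hj a ha) m
      by_cases hzero : (DirectSum.decompose ℳ x m : M) = 0
      · rw [hzero]; exact Submodule.zero_mem _
      · exfalso
        set z := (DirectSum.decompose ℳ x m : M) with hz
        haveI : IsArtinian A M := isArtinian_of_tower k inferInstance
        have hWne : Submodule.span A {z} ≠ ⊥ := by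
          intro h
          apply hzero
          have hmem : z ∈ Submodule.span A {z} := Submodule.mem_span_singleton_self z
          rw [h] at hmem
          simpa using hmem
        rcases eq_bot_or_exists_atom_le (Submodule.span A {z}) with h | ⟨S0, hatom, hle⟩
        · exact hWne h
        haveI hsimp : IsSimpleModule A ↥S0 := isSimpleModule_iff_isAtom.mpr hatom
        have hsoc : S0 ≤ socM A M := le_sSup hsimp
        obtain ⟨y, hyS, hyne⟩ := (Submodule.ne_bot_iff S0).mp hatom.1
        have hyc : y ∈ ℳ c := hsocdeg (by exact hsoc hyS)
        obtain ⟨a, rfl⟩ := Submodule.mem_span_singleton.mp (hle hyS)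
        apply hyne
        have hmem2 : a • z ∈ ⨆ s, ⨆ _ : s ≠ c, ℳ s := by
          rw [aux_smul_sum 𝒜 a z]
          refine Submodule.sum_mem _ fun t _ => ?_
          rcases lt_or_ge t 0 with ht | ht
          · rw [aux_neg_comp 𝒜 hpos a ht, zero_smul]; exact Submodule.zero_mem _
          rcases lt_trichotomy (t + m) c with h1 | h1 | h1
          · exact Submodule.mem_iSup_of_mem (t + m)
              (Submodule.mem_iSup_of_mem (by omega)
                (aux_smul_mem 𝒜 ℳ (DirectSum.decompose 𝒜 a t).2
                  (DirectSum.decompose ℳ x m).2))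
          · rw [hcomp t (by omega) _ (DirectSum.decompose 𝒜 a t).2]
            exact Submodule.zero_mem _
          · have hbot : ℳ (t + m) = ⊥ := htop _ h1
            have hmm := aux_smul_mem 𝒜 ℳ (DirectSum.decompose 𝒜 a t).2
              (DirectSum.decompose ℳ x m).2
            rw [hbot] at hmm
            rw [(Submodule.mem_bot k).mp hmm]
            exact Submodule.zero_mem _
        have hdis := ((DirectSum.Decomposition.isInternal ℳ).submodule_iSupIndep) c
        exact Submodule.disjoint_def.mp hdis _ hyc hmem2
  · refine iSup_le fun m => iSup_le fun hm => ?_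
    intro x hx
    rw [Submodule.restrictScalars_mem, mem_annA]
    intro j hj a ha
    have hmem := aux_smul_mem 𝒜 ℳ ha hx
    rw [htop (j + m) (by omega)] at hmem
    exact (Submodule.mem_bot k).mp hmem

lemma aux_soc_eq [FiniteDimensional k A] (hpos : ∀ i : ℤ, i < 0 → 𝒜 i = ⊥)
    (hss : IsSemisimpleRing ↥(𝒜 0))
    (hgen : ∀ i : ℤ, 0 ≤ i → 𝒜 (i + 1) = 𝒜 1 * 𝒜 i)
    {DA : ℤ} (hA : ∀ j : ℤ, DA < j → 𝒜 j = ⊥) :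
    ∀ n : ℕ, socSeries A M n = annA 𝒜 hpos n := by
  intro n
  induction n with
  | zero =>
    apply le_antisymm
    · exact bot_le
    · intro x hx
      have h1 : (1 : A) • x = 0 := hx 0 le_rfl 1 (SetLike.one_mem_graded 𝒜)
      rw [one_smul] at h1
      rw [h1]
      exact Submodule.zero_mem _
  | succ n ih =>
    have hstep : socSeries A M (n + 1) = socStep (annA 𝒜 hpos n) := by
      rw [show socSeries A M (n + 1) = socStep (socSeries A M n) from rfl, ih]
    rw [hstep]
    apply le_antisymm
    · intro x hx
      simp only [socStep, Submodule.mem_comap] at hx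
      rw [mem_annA]
      intro t ht a2 ha2
      have hsplit : a2 ∈ 𝒜 (t - 1) * 𝒜 1 := by
        have h2 := aux_gen 𝒜 hgen (t - 1) (by push_cast at ht ⊢; omega) 1 (by norm_num)
        rw [sub_add_cancel] at h2
        exact h2 ha2
      refine Submodule.mul_induction_on hsplit ?_ ?_
      · intro p hp q hq
        rw [mul_smul]
        have hqx : q • x ∈ annA 𝒜 hpos n := by
          have h3 : (annA 𝒜 hpos n).mkQ (q • x) = 0 := by
            rw [map_smul]
            exact aux_kill_socle 𝒜 hpos hA hx le_rfl hq
          rwa [Submodule.mkQ_apply, Submodule.Quotient.mk_eq_zero] at h3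
        exact hqx (t - 1) (by push_cast at ht ⊢; omega) p hp
      · intro p q h1 h2
        rw [add_smul, h1, h2, add_zero]
    · intro x hx
      simp only [socStep, Submodule.mem_comap]
      have hkill : ∀ j : ℤ, 1 ≤ j → ∀ b ∈ 𝒜 j, ∀ y : M ⧸ annA 𝒜 hpos n,
          y ∈ Submodule.map (annA 𝒜 hpos n).mkQ (annA 𝒜 hpos (n + 1)) → b • y = 0 := by
        rintro j hj b hb y ⟨x', hx', rfl⟩
        rw [← map_smul, Submodule.mkQ_apply, Submodule.Quotient.mk_eq_zero, mem_annA]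
        intro t2 ht2 a3 ha3
        rw [← mul_smul]
        exact hx' (t2 + j) (by push_cast at ht2 ⊢; omega) _ (SetLike.mul_mem_graded ha3 hb)
      have hPss := aux_ss 𝒜 hpos hss
        (Submodule.map (annA 𝒜 hpos n).mkQ (annA 𝒜 hpos (n + 1))) hkill
      have hPle := aux_le_soc
        (Submodule.map (annA 𝒜 hpos n).mkQ (annA 𝒜 hpos (n + 1))) hPss
      exact hPle (Submodule.mem_map_of_mem hx)

end Aux

/-- let `A` be a finite-dimensional positively graded algebra over a field
with `A_0` semisimple and `A` generated in degree 1, and `M` a finite-dimensional graded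
`A`-module with simple socle concentrated in degree `c`.  Then `soc^i M = M_{≥ c−i+1}`
for every `i ≥ 0`. -/
theorem statement19 {k A M : Type*} [Field k] [Ring A] [Algebra k A]
    (𝒜 : ℤ → Submodule k A) [GradedAlgebra 𝒜]
    [AddCommGroup M] [Module k M] [Module A M] [IsScalarTower k A M]
    (ℳ : ℤ → Submodule k M) [SetLike.GradedSMul 𝒜 ℳ] [DirectSum.Decomposition ℳ]
    [FiniteDimensional k A] [FiniteDimensional k M]
    (hpos : ∀ i : ℤ, i < 0 → 𝒜 i = ⊥)
    (hss : IsSemisimpleRing ↥(𝒜 0))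
    (hgen : ∀ i : ℤ, 0 ≤ i → 𝒜 (i + 1) = 𝒜 1 * 𝒜 i)
    (c : ℤ)
    (hsocsimple : IsSimpleModule A ↥(socM A M))
    (hsocdeg : Submodule.restrictScalars k (socM A M) ≤ ℳ c)
    (i : ℕ) :
    Submodule.restrictScalars k (socSeries A M i) =
      ⨆ m : ℤ, ⨆ _ : c - (i : ℤ) + 1 ≤ m, ℳ m := by
  obtain ⟨DA, hDA0, hA⟩ := aux_finA 𝒜
  have h1 : socSeries A M i = annA 𝒜 hpos i := aux_soc_eq 𝒜 hpos hss hgen hA i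
  rw [h1]
  exact aux_ann_eq 𝒜 ℳ hpos c hsocdeg i
end
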